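/- arXiv:0911.5543 — 6 statements merged into one kernel-verified Lean document; each statement's English description precedes it below -/
import Mathlib

section
/- Let k be a field and α, β ∈ k \ {0}, and let n, m be positive integers. Write d = gcd(n, m) = λn + μm with λ, μ ∈ ℤ. Then gcd(Y^n - α, Y^m - β) in k[Y] equals Y^d - α^λ β^μ if α^{m/d} = β^{n/d}, and equals 1 otherwise. -/
open Polynomial

/-- Gcd of two radical polynomials over a field: with `d = gcd(n,m) = λn + μm`,
`gcd(Y^n - α, Y^m - β)` is `Y^d - α^λ β^μ` if `α^{m/d} = β^{n/d}` and `1` otherwise. -/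
theorem stmt1 (k : Type) [Field k] [DecidableEq k] (α β : k) (hα : α ≠ 0) (hβ : β ≠ 0)
    (n m : ℕ) (hn : 0 < n) (hm : 0 < m) (lam mu : ℤ)
    (hbez : lam * (n : ℤ) + mu * (m : ℤ) = (Nat.gcd n m : ℤ)) :
    gcd ((X : k[X]) ^ n - C α) ((X : k[X]) ^ m - C β) =
      if α ^ (m / Nat.gcd n m) = β ^ (n / Nat.gcd n m)
      then (X : k[X]) ^ (Nat.gcd n m) - C (α ^ lam * β ^ mu)
      else 1 := by
  classical
  set d := Nat.gcd n m with hd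
  have hd0 : 0 < d := Nat.gcd_pos_of_pos_left m hn
  have hdn : d ∣ n := Nat.gcd_dvd_left n m
  have hdm : d ∣ m := Nat.gcd_dvd_right n m
  set n' := n / d with hn'
  set m' := m / d with hm'
  have hnn' : d * n' = n := Nat.mul_div_cancel' hdn
  have hmm' : d * m' = m := Nat.mul_div_cancel' hdm
  have hbez' : lam * n' + mu * m' = 1 := by
    have hdz : (d : ℤ) ≠ 0 := by exact_mod_cast hd0.ne'
    have hmain : (d:ℤ) * (lam * n' + mu * m') = (d:ℤ) * 1 := by
      have h1 : (n : ℤ) = (d : ℤ) * (n' : ℤ) := by exact_mod_cast hnn'.symm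
      have h2 : (m : ℤ) = (d : ℤ) * (m' : ℤ) := by exact_mod_cast hmm'.symm
      rw [h1, h2] at hbez
      linarith [hbez]
    exact mul_left_cancel₀ hdz hmain
  set uα : kˣ := Units.mk0 α hα with huα
  set uβ : kˣ := Units.mk0 β hβ with huβ
  set e : kˣ := uα ^ lam * uβ ^ mu with he
  set c : k := α ^ lam * β ^ mu with hc
  have hec : (e : k) = c := by
    simp [he, hc, huα, huβ, Units.val_zpow_eq_zpow_val]
  set p : k[X] := X ^ n - C α with hp
  set q : k[X] := X ^ m - C β with hq
  have hgp : gcd p q ∣ p := gcd_dvd_left p q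
  have hgq : gcd p q ∣ q := gcd_dvd_right p q
  -- X is coprime to the gcd
  have hXg : IsCoprime (X : k[X]) (gcd p q) := by
    rw [Polynomial.irreducible_X.coprime_iff_not_dvd]
    intro hdvd
    have hXp : (X : k[X]) ∣ p := hdvd.trans hgp
    rw [X_dvd_iff] at hXp
    simp [hp, coeff_X_pow, hn.ne, hα, zero_sub, neg_eq_zero] at hXp
  -- key divisibility : gcd p q ∣ X^d - C c
  have hkey : gcd p q ∣ (X : k[X]) ^ d - C c := by
    set I : Ideal k[X] := Ideal.span {gcd p q} with hI
    set φ : k[X] →+* k[X] ⧸ I := Ideal.Quotient.mk I with hφ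
    have hker : ∀ f : k[X], φ f = 0 ↔ gcd p q ∣ f := fun f => by
      rw [hφ, Ideal.Quotient.eq_zero_iff_mem, hI, Ideal.mem_span_singleton]
    have hux : IsUnit (φ X) := by
      obtain ⟨a, b, hab⟩ := hXg
      refine IsUnit.of_mul_eq_one (a := φ X) (φ a) ?_
      have h1 : φ (a * X + b * gcd p q) = 1 := by rw [hab, map_one]
      rw [map_add, map_mul, map_mul, (hker _).mpr dvd_rfl, mul_zero, add_zero] at h1
      rw [mul_comm]; exact h1
    set u : (k[X] ⧸ I)ˣ := hux.unit with hu
    set ρ : kˣ →* (k[X] ⧸ I)ˣ := Units.map (φ.comp Polynomial.C).toMonoidHom with hρ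
    have hun : u ^ n = ρ uα := by
      apply Units.ext
      have : (φ X) ^ n = φ (C α) := by
        rw [← map_pow, ← sub_eq_zero, ← map_sub]
        exact (hker _).mpr hgp
      simpa [hu, hρ, huα] using this
    have hum : u ^ m = ρ uβ := by
      apply Units.ext
      have : (φ X) ^ m = φ (C β) := by
        rw [← map_pow, ← sub_eq_zero, ← map_sub]
        exact (hker _).mpr hgq
      simpa [hu, hρ, huβ] using this
    have hud : u ^ d = ρ e := by
      have h1 : u ^ (d : ℤ) = ρ e := by
        calc u ^ (d : ℤ) = u ^ (lam * n + mu * m) := by rw [hbez]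
          _ = (u ^ (n : ℤ)) ^ lam * (u ^ (m : ℤ)) ^ mu := by
              rw [zpow_add, mul_comm lam, mul_comm mu, zpow_mul, zpow_mul]
          _ = (ρ uα) ^ lam * (ρ uβ) ^ mu := by rw [zpow_natCast, zpow_natCast, hun, hum]
          _ = ρ e := by rw [he, map_mul, map_zpow, map_zpow]
      rw [← zpow_natCast, h1]
    have hz : φ ((X : k[X]) ^ d - C c) = 0 := by
      have hval : (φ X) ^ d = φ (C c) := by
        have h2 := congrArg Units.val hud
        simpa [hu, hρ, hec] using h2
      rw [map_sub, map_pow, hval, sub_self]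
    exact (hker _).mp hz
  -- divisibility of X^N - C (c^(N/d)) by X^d - C c
  have hdiv : ∀ N : ℕ, d ∣ N → ((X : k[X]) ^ d - C c) ∣ X ^ N - C (c ^ (N / d)) := by
    intro N hN
    have hNe : (X : k[X]) ^ N - C (c ^ (N / d)) = (X ^ d) ^ (N / d) - (C c) ^ (N / d) := by
      rw [← pow_mul, Nat.mul_div_cancel' hN, ← map_pow]
    rw [hNe]
    exact sub_dvd_pow_sub_pow _ _ _
  have hgc1 : gcd p q ∣ C (c ^ n' - α) := by
    have h1 : gcd p q ∣ (X : k[X]) ^ n - C (c ^ n') := hkey.trans (hdiv n hdn)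
    have h2 := dvd_sub hgp h1
    have h3 : p - ((X : k[X]) ^ n - C (c ^ n')) = C (c ^ n' - α) := by
      rw [hp, map_sub]; ring
    rwa [h3] at h2
  have hgc2 : gcd p q ∣ C (c ^ m' - β) := by
    have h1 : gcd p q ∣ (X : k[X]) ^ m - C (c ^ m') := hkey.trans (hdiv m hdm)
    have h2 := dvd_sub hgq h1
    have h3 : q - ((X : k[X]) ^ m - C (c ^ m')) = C (c ^ m' - β) := by
      rw [hq, map_sub]; ring
    rwa [h3] at h2
  by_cases hcond : α ^ m' = β ^ n'
  · rw [if_pos hcond]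
    have hba : uβ ^ (n' : ℤ) = uα ^ (m' : ℤ) := by
      rw [zpow_natCast, zpow_natCast]
      apply Units.ext
      simpa [huα, huβ] using hcond.symm
    have he1 : e ^ (n' : ℤ) = uα := by
      calc e ^ (n' : ℤ) = uα ^ (lam * n') * uβ ^ (mu * n') := by
            rw [he, mul_zpow, ← zpow_mul, ← zpow_mul]
        _ = uα ^ (lam * n') * uα ^ (m' * mu) := by
            rw [mul_comm mu (n' : ℤ), zpow_mul uβ (n' : ℤ) mu, hba, ← zpow_mul uα (m' : ℤ) mu]
        _ = uα ^ (lam * n' + m' * mu) := by rw [← zpow_add]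
        _ = uα := by
            have : lam * (n' : ℤ) + (m' : ℤ) * mu = 1 := by linarith [hbez']
            rw [this, zpow_one]
    have he2 : e ^ (m' : ℤ) = uβ := by
      calc e ^ (m' : ℤ) = uα ^ (lam * m') * uβ ^ (mu * m') := by
            rw [he, mul_zpow, ← zpow_mul, ← zpow_mul]
        _ = uβ ^ (n' * lam) * uβ ^ (mu * m') := by
            rw [mul_comm lam (m' : ℤ), zpow_mul uα (m' : ℤ) lam, ← hba, ← zpow_mul uβ (n' : ℤ) lam]
        _ = uβ ^ (n' * lam + mu * m') := by rw [← zpow_add]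
        _ = uβ := by
            have : (n' : ℤ) * lam + mu * (m' : ℤ) = 1 := by linarith [hbez']
            rw [this, zpow_one]
    have hcn : c ^ n' = α := by
      have := congrArg Units.val he1
      simpa [← hec, ← zpow_natCast, huα, Units.val_zpow_eq_zpow_val] using this
    have hcm : c ^ m' = β := by
      have := congrArg Units.val he2
      simpa [← hec, ← zpow_natCast, huβ, Units.val_zpow_eq_zpow_val] using this
    have hdp : ((X : k[X]) ^ d - C c) ∣ p := by
      have := hdiv n hdn
      rwa [← hn', hcn, ← hp] at this
    have hdq : ((X : k[X]) ^ d - C c) ∣ q := by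
      have := hdiv m hdm
      rwa [← hm', hcm, ← hq] at this
    have hle : ((X : k[X]) ^ d - C c) ∣ gcd p q := dvd_gcd hdp hdq
    have hassoc : Associated (gcd p q) ((X : k[X]) ^ d - C c) :=
      associated_of_dvd_dvd hkey hle
    have hmon : ((X : k[X]) ^ d - C c).Monic := monic_X_pow_sub_C c hd0.ne'
    calc gcd p q = normalize (gcd p q) := (normalize_gcd p q).symm
      _ = normalize ((X : k[X]) ^ d - C c) := normalize_eq_normalize hkey hle
      _ = (X : k[X]) ^ d - C c := hmon.normalize_eq_self
  · rw [if_neg hcond]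
    have hne : c ^ n' - α ≠ 0 ∨ c ^ m' - β ≠ 0 := by
      by_contra hcon
      push_neg at hcon
      obtain ⟨h1, h2⟩ := hcon
      rw [sub_eq_zero] at h1 h2
      apply hcond
      rw [← h1, ← h2, ← pow_mul, ← pow_mul, Nat.mul_comm]
    have hunit : IsUnit (gcd p q) := by
      rcases hne with h0 | h0
      · exact isUnit_of_dvd_unit hgc1 (isUnit_C.mpr (isUnit_iff_ne_zero.mpr h0))
      · exact isUnit_of_dvd_unit hgc2 (isUnit_C.mpr (isUnit_iff_ne_zero.mpr h0))
    rw [← normalize_gcd]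
    exact normalize_eq_one.mpr hunit
end

section
/- Let k be a field, α, β ∈ k \ {0}, and n, m positive integers with n ≥ m. Write n = qm + r with 0 ≤ r < m. Then the remainder of Y^n - α upon division by Y^m - β equals β^q·(Y^r - α·β^{-q}). -/
open Polynomial

/-- Long division of radical polynomials: if `n = q·m + r` with `0 ≤ r < m`, then
`(Y^n - α) mod (Y^m - β) = β^q·(Y^r - α·β^{-q})`. -/
theorem stmt2 (k : Type) [Field k] (α β : k) (hα : α ≠ 0) (hβ : β ≠ 0)
    (n m : ℕ) (hm : 0 < m) (hmn : m ≤ n) :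
    ((X : k[X]) ^ n - C α) %ₘ ((X : k[X]) ^ m - C β) =
      C (β ^ (n / m)) * ((X : k[X]) ^ (n % m) - C (α * (β ^ (n / m))⁻¹)) := by
  have hβq : (β : k) ^ (n / m) ≠ 0 := pow_ne_zero _ hβ
  have hmonic : (X ^ m - C β : k[X]).Monic := by
    apply monic_X_pow_sub_C β hm.ne'
  have hrhs : C (β ^ (n / m)) * ((X : k[X]) ^ (n % m) - C (α * (β ^ (n / m))⁻¹)) =
      C (β ^ (n / m)) * X ^ (n % m) - C α := by
    rw [mul_sub, ← C_mul]
    congr 2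
    field_simp
  rw [hrhs]
  have hdvd : (X ^ m - C β : k[X]) ∣
      (X ^ n - C α) - (C (β ^ (n / m)) * X ^ (n % m) - C α) := by
    have : (X ^ n - C α : k[X]) - (C (β ^ (n / m)) * X ^ (n % m) - C α)
        = ((X ^ m) ^ (n / m) - C β ^ (n / m)) * X ^ (n % m) := by
      rw [sub_sub_sub_cancel_right, sub_mul, ← pow_mul, ← pow_add,
        Nat.div_add_mod, ← C_pow]
    rw [this]
    exact Dvd.dvd.mul_right (sub_dvd_pow_sub_pow _ _ _) _
  rw [Polynomial.modByMonic_eq_of_dvd_sub hmonic hdvd,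
    Polynomial.modByMonic_eq_self_iff hmonic]
  have hdeg : (X ^ m - C β : k[X]).degree = m := by
    simpa using degree_X_pow_sub_C hm β
  rw [hdeg]
  calc (C (β ^ (n / m)) * X ^ (n % m) - C α).degree
      ≤ max (C (β ^ (n / m)) * X ^ (n % m)).degree (C α).degree := degree_sub_le _ _
    _ < m := by
        apply max_lt
        · apply lt_of_le_of_lt (degree_mul_le _ _)
          have h1 : (C (β ^ (n / m)) : k[X]).degree ≤ 0 := degree_C_le
          have h2 : ((X : k[X]) ^ (n % m)).degree = (n % m : ℕ) := degree_X_pow _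
          calc _ ≤ 0 + ((n % m : ℕ) : WithBot ℕ) := add_le_add h1 h2.le
            _ = ((n % m : ℕ) : WithBot ℕ) := zero_add _
            _ < m := by exact_mod_cast Nat.mod_lt n hm
        · exact lt_of_le_of_lt degree_C_le (by exact_mod_cast hm)
end

section
/- Let q be a prime power, n a positive integer coprime to q, and α ∈ 𝔽_q^*. Let e = ord(α) be the multiplicative order of α in 𝔽_q^*. Then for any positive integer m, the polynomial Y^n - α splits completely over 𝔽_{q^m} if and only if n·e divides q^m - 1. Consequently, the degree of the splitting field of Y^n - α over 𝔽_q equals the multiplicative order of q in (ℤ/(n·e)ℤ)^*. -/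
open Polynomial

/-- In a finite field `F`, for `0 < n` with `(n : F) ≠ 0` and `a ≠ 0`, the polynomial
`X^n - a` splits over `F` iff `n * orderOf a` divides `card F - 1`. -/
lemma key_splits {F : Type*} [Field F] [Fintype F] {n : ℕ} (hn : 0 < n) (hnF : (n : F) ≠ 0)
    {a : F} (ha : a ≠ 0) :
    Splits ((X : F[X]) ^ n - C a) ↔ n * orderOf a ∣ Fintype.card F - 1 := by
  classical
  haveI : NeZero n := ⟨hn.ne'⟩
  set N := Fintype.card F - 1 with hNdef
  have hNu : Fintype.card Fˣ = N := by rw [Fintype.card_units]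
  set au : Fˣ := Units.mk0 a ha with hau
  have haua : orderOf a = orderOf au := by
    rw [← orderOf_units (y := au), Units.val_mk0]
  constructor
  · intro h
    -- get a root β
    have hdeg : ((X : F[X]) ^ n - C a).degree ≠ 0 := by
      rw [degree_X_pow_sub_C hn]
      exact_mod_cast hn.ne'
    obtain ⟨β, hβ⟩ := Splits.exists_eval_eq_zero h hdeg
    rw [eval_sub, eval_pow, eval_X, eval_C, sub_eq_zero] at hβ
    have hβ0 : β ≠ 0 := by
      rintro rfl
      rw [zero_pow hn.ne'] at hβ
      exact ha hβ.symm
    set βu : Fˣ := Units.mk0 β hβ0 with hβu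
    have hβun : βu ^ n = au := by
      ext
      simp [hβu, hau, hβ]
    -- n divides N via counting roots of unity
    have hsep : ((X : F[X]) ^ n - C a).Separable := separable_X_pow_sub_C a hnF ha
    have hcard : Multiset.card ((X : F[X]) ^ n - C a).roots = n := by
      rw [splits_iff_card_roots.mp h, natDegree_X_pow_sub_C]
    have hnodup := nodup_roots hsep
    set T : Finset F := ((X : F[X]) ^ n - C a).roots.toFinset with hT
    have hTcard : T.card = n := by
      rw [hT, Multiset.toFinset_card_of_nodup hnodup, hcard]
    set T' : Finset F := T.image (· * β⁻¹) with hT'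
    have hT'card : T'.card = n := by
      rw [hT', Finset.card_image_of_injective _ (mul_left_injective₀ (inv_ne_zero hβ0)), hTcard]
    have hT'mem : ∀ x ∈ T', x ^ n = 1 := by
      intro x hx
      rw [hT', Finset.mem_image] at hx
      obtain ⟨γ, hγ, rfl⟩ := hx
      have hγr : γ ^ n = a := by
        have h1 := Multiset.mem_toFinset.mp hγ
        have h2 := (mem_roots'.mp h1).2
        rw [IsRoot.def, eval_sub, eval_pow, eval_X, eval_C, sub_eq_zero] at h2
        exact h2
      rw [mul_pow, hγr, inv_pow, hβ, mul_inv_cancel₀ ha]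
    have hle : n ≤ Fintype.card (rootsOfUnity n F) := by
      have hmem : ∀ x ∈ T', x ∈ nthRoots n (1 : F) :=
        fun x hx => (mem_nthRoots hn).mpr (hT'mem x hx)
      let inj : {x // x ∈ T'} → rootsOfUnity n F := fun x =>
        (rootsOfUnityEquivNthRoots F n).symm ⟨x.1, hmem x.1 x.2⟩
      have hinj : Function.Injective inj := by
        intro x y hxy
        have h1 := congrArg (fun z : rootsOfUnity n F => ((z : Fˣ) : F)) hxy
        simp only [inj, rootsOfUnityEquivNthRoots_symm_apply] at h1
        exact Subtype.ext h1
      calc n = T'.card := hT'card.symm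
        _ = Fintype.card {x // x ∈ T'} := (Fintype.card_coe T').symm
        _ ≤ Fintype.card (rootsOfUnity n F) := Fintype.card_le_of_injective inj hinj
    have hcardU : Fintype.card (rootsOfUnity n F) = n :=
      le_antisymm (by have := card_rootsOfUnity F n; rwa [Nat.card_eq_fintype_card] at this) hle
    have hnN : n ∣ N := by
      rw [← hcardU, ← hNu, ← Nat.card_eq_fintype_card, ← Nat.card_eq_fintype_card]
      exact Subgroup.card_subgroup_dvd_card _
    -- order of β divides N
    have htN : orderOf βu ∣ N := by
      have h1 : orderOf βu ∣ Fintype.card Fˣ := orderOf_dvd_card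
      rwa [hNu] at h1
    have hE : orderOf a = orderOf βu / (orderOf βu).gcd n := by
      rw [haua, ← hβun, orderOf_pow]
    have hgdvd : (orderOf βu).gcd n ∣ orderOf βu := Nat.gcd_dvd_left _ _
    have hlcm : n * orderOf a = Nat.lcm n (orderOf βu) := by
      rw [hE, ← Nat.mul_div_assoc n hgdvd, Nat.gcd_comm, Nat.lcm]
    rw [hlcm]
    exact Nat.lcm_dvd hnN htN
  · intro h
    have hnN : n ∣ N := (Dvd.intro _ rfl).trans h
    -- a primitive n-th root of unity
    obtain ⟨ζu, hζu⟩ : ∃ ζu : Fˣ, orderOf ζu = n := by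
      have hcard : (Finset.filter (fun u : Fˣ => orderOf u = n) Finset.univ).card
          = Nat.totient n := IsCyclic.card_orderOf_eq_totient (by rw [hNu]; exact hnN)
      have hpos : 0 < (Finset.filter (fun u : Fˣ => orderOf u = n) Finset.univ).card := by
        rw [hcard]; exact Nat.totient_pos.mpr hn
      obtain ⟨ζu, hζu⟩ := Finset.card_pos.mp hpos
      exact ⟨ζu, (Finset.mem_filter.mp hζu).2⟩
    have hζ : IsPrimitiveRoot ((ζu : F)) n := by
      have h1 := IsPrimitiveRoot.orderOf ζu
      rw [hζu] at h1
      exact IsPrimitiveRoot.coe_units_iff.mpr h1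
    -- a is an n-th power
    obtain ⟨g, hg⟩ := IsCyclic.exists_generator (α := Fˣ)
    obtain ⟨k, hk0⟩ := (mem_powers_iff_mem_zpowers).mpr (hg au)
    have hk : g ^ k = au := hk0
    have hog : orderOf g = N := by
      rw [orderOf_eq_card_of_forall_mem_zpowers hg, Nat.card_eq_fintype_card, hNu]
    have he' : orderOf a = N / N.gcd k := by
      rw [haua, ← hk, orderOf_pow, hog]
    have hepos : 0 < orderOf a := by rw [haua]; exact orderOf_pos _
    have hdN : N.gcd k ∣ N := Nat.gcd_dvd_left N k
    have hNdk : N = N.gcd k * orderOf a := by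
      rw [he', Nat.mul_div_cancel' hdN]
    have hnd : n ∣ N.gcd k := by
      have h2 := h
      rw [hNdk] at h2
      exact (Nat.mul_dvd_mul_iff_right hepos).mp h2
    obtain ⟨j, hj⟩ := hnd.trans (Nat.gcd_dvd_right N k)
    have hβ : ((g ^ j : Fˣ) : F) ^ n = a := by
      have h3 : (g ^ j) ^ n = au := by
        rw [← pow_mul, mul_comm j n, ← hj, hk]
      rw [← Units.val_pow_eq_pow_val, h3, hau, Units.val_mk0]
    exact X_pow_sub_C_splits_of_isPrimitiveRoot hζ hβ

/-- Splitting of `Y^n - α` over finite fields: with `e = ord(α)`, the polynomial `Y^n - α`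
splits completely over `𝔽_{q^m}` iff `n·e ∣ q^m - 1`; consequently the degree of its
splitting field over `𝔽_q` is the multiplicative order of `q` modulo `n·e`. -/
theorem stmt4 (p q n : ℕ) (hp : p.Prime) (hq : ∃ e : ℕ, 0 < e ∧ q = p ^ e) (hn : 0 < n)
    (hcop : Nat.Coprime n q)
    (F0 : Type) [Field F0] [Fintype F0] (hF0 : Fintype.card F0 = q)
    (α : F0) (hα : α ≠ 0) (e : ℕ) (he : e = orderOf α) :
    (∀ (m : ℕ), 0 < m → ∀ (F : Type) [Field F] [Algebra F0 F] [Fintype F],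
        Fintype.card F = q ^ m →
        (Polynomial.Splits (((X : F0[X]) ^ n - C α).map (algebraMap F0 F)) ↔
          n * e ∣ q ^ m - 1)) ∧
    Module.finrank F0 ((X : F0[X]) ^ n - C α).SplittingField
      = orderOf (q : ZMod (n * e)) := by
  classical
  obtain ⟨ε, hε, hqe⟩ := hq
  haveI : Fact p.Prime := ⟨hp⟩
  have hq2 : 2 ≤ q := by
    rw [hqe]
    calc 2 ≤ p := hp.two_le
      _ ≤ p ^ ε := Nat.le_self_pow hε.ne' p
  have hqpos : 0 < q := by omega
  -- the characteristic of F0 is p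
  have hchar0 : CharP F0 p := by
    obtain ⟨k, hkprime, hkcard⟩ := FiniteField.card F0 (ringChar F0)
    have hpd : p ∣ ringChar F0 ^ (k : ℕ) := by
      rw [← hkcard, hF0, hqe]
      exact dvd_pow_self p hε.ne'
    have hpr : p ∣ ringChar F0 := hp.dvd_of_dvd_pow hpd
    have : p = ringChar F0 := ((Nat.prime_dvd_prime_iff_eq hp hkprime).mp hpr)
    rw [this]
    exact ringChar.charP F0
  haveI := hchar0
  -- n is nonzero in F0
  have hnF0 : (n : F0) ≠ 0 := by
    intro h0
    have hdvd : p ∣ n := (CharP.cast_eq_zero_iff F0 p n).mp h0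
    have hpq : p ∣ q := by rw [hqe]; exact dvd_pow_self p hε.ne'
    have h1 : p ∣ Nat.gcd n q := Nat.dvd_gcd hdvd hpq
    rw [Nat.coprime_iff_gcd_eq_one.mp hcop] at h1
    exact hp.one_lt.ne' (Nat.dvd_one.mp h1)
  -- e is positive
  have hα' : orderOf α = orderOf (Units.mk0 α hα) := by
    rw [← orderOf_units (y := Units.mk0 α hα), Units.val_mk0]
  have hepos : 0 < e := by
    rw [he, hα']
    exact orderOf_pos _
  -- Part 1
  have part1 : ∀ (m : ℕ), 0 < m → ∀ (F : Type) [Field F] [Algebra F0 F] [Fintype F],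
      Fintype.card F = q ^ m →
      (Polynomial.Splits (((X : F0[X]) ^ n - C α).map (algebraMap F0 F)) ↔
        n * e ∣ q ^ m - 1) := by
    intro m hm F _ _ _ hF
    have hinj := (algebraMap F0 F).injective
    have horder : orderOf (algebraMap F0 F α) = orderOf α :=
      orderOf_injective (algebraMap F0 F).toMonoidHom hinj α
    have hnF : (n : F) ≠ 0 := by
      intro h0
      apply hnF0
      apply hinj
      rw [map_natCast, map_zero, h0]
    have hαF : algebraMap F0 F α ≠ 0 := fun h0 => hα (hinj (by rw [h0, map_zero]))
    rw [Polynomial.map_sub, Polynomial.map_pow, map_X, map_C,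
      key_splits hn hnF hαF, horder, ← he, hF]
  refine ⟨part1, ?_⟩
  -- Part 2
  set f : F0[X] := (X : F0[X]) ^ n - C α with hf
  set K := f.SplittingField with hK
  haveI : Finite K := Module.finite_of_finite F0
  letI : Fintype K := Fintype.ofFinite K
  set d := Module.finrank F0 K with hd
  have hdpos : 0 < d := Module.finrank_pos
  have hcardK : Fintype.card K = q ^ d := by
    rw [Module.card_eq_pow_finrank (K := F0) (V := K), hF0, hd]
  have hdvd1 : n * e ∣ q ^ d - 1 :=
    (part1 d hdpos K hcardK).mp (SplittingField.splits f)
  have hne0 : n * e ≠ 0 := Nat.mul_ne_zero hn.ne' hepos.ne'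
  haveI : NeZero (n * e) := ⟨hne0⟩
  have cast_iff : ∀ s : ℕ, ((q : ZMod (n * e)) ^ s = 1 ↔ n * e ∣ q ^ s - 1) := by
    intro s
    have h1 : (1 : ℕ) ≤ q ^ s := Nat.one_le_pow _ _ hqpos
    constructor
    · intro hpow
      have h2 : ((q ^ s : ℕ) : ZMod (n * e)) = ((1 : ℕ) : ZMod (n * e)) := by
        push_cast
        exact hpow
      exact (Nat.modEq_iff_dvd' h1).mp ((ZMod.natCast_eq_natCast_iff _ _ _).mp h2).symm
    · intro hdvd
      have h2 := ((Nat.modEq_iff_dvd' h1).mpr hdvd).symm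
      have h3 := (ZMod.natCast_eq_natCast_iff _ _ _).mpr h2
      push_cast at h3
      exact h3
  have hrd : orderOf ((q : ZMod (n * e))) ∣ d :=
    orderOf_dvd_of_pow_eq_one ((cast_iff d).mpr hdvd1)
  set r := orderOf ((q : ZMod (n * e))) with hrdef
  have hrpos : 0 < r := by
    rcases Nat.eq_zero_or_pos r with h0 | h
    · exfalso
      rw [h0] at hrd
      exact hdpos.ne' (Nat.eq_zero_of_zero_dvd hrd)
    · exact h
  have hner : n * e ∣ q ^ r - 1 := (cast_iff r).mp (pow_orderOf_eq_one _)
  -- every element of K satisfies x ^ q ^ r = x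
  haveI : CharP K p := charP_of_injective_algebraMap (algebraMap F0 K).injective p
  have hqr : q ^ r = p ^ (ε * r) := by rw [hqe, ← pow_mul]
  have hqrpos : 0 < q ^ r := Nat.pow_pos (n := r) hqpos
  have hq1r : 1 < q ^ r := Nat.one_lt_pow hrpos.ne' hq2
  let E : Subalgebra F0 K :=
  { carrier := {x : K | x ^ q ^ r = x}
    mul_mem' := fun {x y} hx hy => by
      simp only [Set.mem_setOf_eq] at *
      rw [mul_pow, hx, hy]
    one_mem' := by simp
    add_mem' := fun {x y} hx hy => by
      simp only [Set.mem_setOf_eq] at *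
      rw [hqr] at hx hy ⊢
      rw [add_pow_char_pow, hx, hy]
    algebraMap_mem' := fun c => by
      simp only [Set.mem_setOf_eq]
      rw [← map_pow]
      have hc : c ^ q ^ r = c := by
        rw [← hF0]
        exact FiniteField.pow_card_pow r c
      rw [hc]
    zero_mem' := by
      simp only [Set.mem_setOf_eq]
      exact zero_pow hqrpos.ne' }
  have hroots : ∀ x ∈ f.rootSet K, x ∈ E := by
    intro x hx
    have hx' : x ^ n = algebraMap F0 K α := by
      have h1 : (aeval x) ((X : F0[X]) ^ n - C α) = 0 := (mem_rootSet.mp hx).2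
      rw [map_sub, map_pow, aeval_X, aeval_C, sub_eq_zero] at h1
      exact h1
    have hαe : α ^ e = 1 := by rw [he]; exact pow_orderOf_eq_one α
    have hxe : x ^ (n * e) = 1 := by
      rw [pow_mul, hx', ← map_pow, hαe, map_one]
    have hxdvd : orderOf x ∣ n * e := orderOf_dvd_of_pow_eq_one hxe
    have hx1 : x ^ (q ^ r - 1) = 1 := orderOf_dvd_iff_pow_eq_one.mp (hxdvd.trans hner)
    show x ^ q ^ r = x
    have hq1 : q ^ r - 1 + 1 = q ^ r := Nat.succ_pred_eq_of_pos hqrpos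
    calc x ^ q ^ r = x ^ (q ^ r - 1 + 1) := by rw [hq1]
      _ = x ^ (q ^ r - 1) * x := pow_succ _ _
      _ = x := by rw [hx1, one_mul]
  have hEtop : E = ⊤ := by
    refine le_antisymm le_top ?_
    rw [← Polynomial.SplittingField.adjoin_rootSet f]
    exact Algebra.adjoin_le hroots
  have hall : ∀ x : K, x ^ q ^ r = x := by
    intro x
    have hx : x ∈ E := by rw [hEtop]; exact Algebra.mem_top
    exact hx
  -- card bound
  have hcardle : Fintype.card K ≤ q ^ r := by
    set g : K[X] := X ^ q ^ r - X with hg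
    have hdeg : g.natDegree = q ^ r := by
      rw [hg]
      rw [natDegree_sub_eq_left_of_natDegree_lt]
      · exact natDegree_X_pow _
      · rw [natDegree_X, natDegree_X_pow]
        exact hq1r
    have hgne : g ≠ 0 := by
      intro h0
      rw [h0, natDegree_zero] at hdeg
      omega
    have hsub : (Finset.univ : Finset K) ⊆ g.roots.toFinset := by
      intro x _
      rw [Multiset.mem_toFinset, mem_roots hgne]
      show eval x g = 0
      rw [hg, eval_sub, eval_pow, eval_X, hall x, sub_self]
    calc Fintype.card K = (Finset.univ : Finset K).card := (Finset.card_univ).symm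
      _ ≤ g.roots.toFinset.card := Finset.card_le_card hsub
      _ ≤ Multiset.card g.roots := Multiset.toFinset_card_le _
      _ ≤ g.natDegree := g.card_roots'
      _ = q ^ r := hdeg
  have hdr : d ≤ r := by
    rw [hcardK] at hcardle
    exact (Nat.pow_le_pow_iff_right hq2).mp hcardle
  exact Nat.le_antisymm hdr (Nat.le_of_dvd hdpos hrd)
end

section
/- Let n ≥ 2, let (e_j)_{j ∈ ℤ} be a family of nonnegative integers, almost all zero, and fix i ∈ {1, …, n-1}. With deg D = ∑_j j·e_j and deg D_i = ∑_j ⌊i·j/n⌋·e_j, equality deg D_i = ⌈i·(deg D)/n⌉ holds if and only if for every j ∈ ℤ, either e_j = 0 or n divides i·j. -/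
private lemma floor_cast_of_dvd (n : ℕ) (hn : 0 < n) (m : ℤ) (h : (n : ℤ) ∣ m) :
    ((⌊(m : ℚ) / (n : ℚ)⌋ : ℚ)) = (m : ℚ) / (n : ℚ) := by
  obtain ⟨k, hk⟩ := h
  subst hk
  have hn0 : (n : ℚ) ≠ 0 := by exact_mod_cast hn.ne'
  have h1 : (((n : ℤ) * k : ℤ) : ℚ) / (n : ℚ) = (k : ℚ) := by
    push_cast; field_simp
  rw [h1, Int.floor_intCast]

/-- With `deg D = ∑_j j·e_j` and `deg D_i = ∑_j ⌊i·j/n⌋·e_j` (almost all `e_j` zero), for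
`1 ≤ i < n`: `deg D_i = ⌈i·deg D/n⌉` iff for every `j`, either `e_j = 0` or `n ∣ i·j`. -/
theorem stmt12 (n : ℕ) (hn : 2 ≤ n) (e : ℤ →₀ ℕ) (i : ℕ) (hi1 : 1 ≤ i) (hin : i < n)
    (degD degDi : ℤ)
    (hdegD : degD = ∑ j ∈ e.support, j * (e j : ℤ))
    (hdegDi : degDi = ∑ j ∈ e.support, ⌊((i : ℚ) * (j : ℚ)) / (n : ℚ)⌋ * (e j : ℤ)) :
    degDi = ⌈((i : ℚ) * (degD : ℚ)) / (n : ℚ)⌉ ↔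
      ∀ j : ℤ, e j = 0 ∨ (n : ℤ) ∣ (i : ℤ) * j := by
  have hn0 : (0:ℕ) < n := by omega
  have hnq : (n : ℚ) ≠ 0 := by exact_mod_cast hn0.ne'
  set s := e.support with hs
  -- S : the rational value i * degD / n, as a sum
  have hS : ((i : ℚ) * (degD : ℚ)) / (n : ℚ)
      = ∑ j ∈ s, ((i : ℚ) * (j : ℚ) / (n : ℚ)) * (e j : ℚ) := by
    rw [hdegD]; push_cast
    rw [Finset.mul_sum, Finset.sum_div]
    exact Finset.sum_congr rfl fun j _ => by ring
  have hle : ∀ j ∈ s, ((⌊((i : ℚ) * (j : ℚ)) / (n : ℚ)⌋ : ℚ)) * (e j : ℚ)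
      ≤ ((i : ℚ) * (j : ℚ) / (n : ℚ)) * (e j : ℚ) := fun j _ =>
    mul_le_mul_of_nonneg_right (Int.floor_le _) (by positivity)
  have hcast : (degDi : ℚ)
      = ∑ j ∈ s, ((⌊((i : ℚ) * (j : ℚ)) / (n : ℚ)⌋ : ℚ)) * (e j : ℚ) := by
    rw [hdegDi]; push_cast; rfl
  constructor
  · intro h j
    by_cases hj : e j = 0
    · exact Or.inl hj
    · right
      have hjs : j ∈ s := Finsupp.mem_support_iff.mpr hj
      -- degDi ≥ S since degDi = ⌈S⌉
      have hge : ((i : ℚ) * (degD : ℚ)) / (n : ℚ) ≤ (degDi : ℚ) := by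
        rw [h]; exact Int.le_ceil _
      have hle2 : (degDi : ℚ) ≤ ((i : ℚ) * (degD : ℚ)) / (n : ℚ) := by
        rw [hcast, hS]; exact Finset.sum_le_sum hle
      have heqsum : ∑ j ∈ s, ((⌊((i : ℚ) * (j : ℚ)) / (n : ℚ)⌋ : ℚ)) * (e j : ℚ)
          = ∑ j ∈ s, ((i : ℚ) * (j : ℚ) / (n : ℚ)) * (e j : ℚ) := by
        rw [← hcast, ← hS]; exact le_antisymm hle2 hge
      have hterm := (Finset.sum_eq_sum_iff_of_le hle).mp heqsum j hjs
      have hepos : (0:ℚ) < (e j : ℚ) := by exact_mod_cast Nat.pos_of_ne_zero hj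
      have hfl : ((⌊((i : ℚ) * (j : ℚ)) / (n : ℚ)⌋ : ℚ)) = (i : ℚ) * (j : ℚ) / (n : ℚ) :=
        mul_right_cancel₀ hepos.ne' hterm
      -- so i*j = n * floor
      have : ((i : ℤ) * j : ℚ) = ((n : ℤ) * ⌊((i : ℚ) * (j : ℚ)) / (n : ℚ)⌋ : ℚ) := by
        push_cast
        rw [hfl]
        field_simp
      exact ⟨_, by exact_mod_cast this⟩
  · intro h
    have hEq : (degDi : ℚ) = ((i : ℚ) * (degD : ℚ)) / (n : ℚ) := by
      rw [hcast, hS]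
      refine Finset.sum_congr rfl fun j hjs => ?_
      have hd : (n : ℤ) ∣ (i : ℤ) * j := (h j).resolve_left (Finsupp.mem_support_iff.mp hjs)
      have := floor_cast_of_dvd n hn0 ((i : ℤ) * j) hd
      push_cast at this
      rw [this]
    rw [← hEq, Int.ceil_intCast]
end

section
/- Let K = k(x, y) with y^n = D, n coprime to char k, Y^n - D irreducible over k(x). Let 𝔭 be a place of k(x) with uniformizer π. Then (π^{-⌊i·v_𝔭(D)/n⌋}·y^i)_{i=0,…,n-1} is an o_𝔭-basis of the integral closure O'_𝔭 of the valuation ring o_𝔭 in K. -/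
open Polynomial

private lemma nu_one {F : Type} [Field F] (ν : F → ℤ)
    (hmul : ∀ a b : F, a ≠ 0 → b ≠ 0 → ν (a * b) = ν a + ν b) : ν 1 = 0 := by
  have h := hmul 1 1 one_ne_zero one_ne_zero
  rw [mul_one] at h
  omega

private lemma nu_pow {F : Type} [Field F] (ν : F → ℤ)
    (hmul : ∀ a b : F, a ≠ 0 → b ≠ 0 → ν (a * b) = ν a + ν b)
    (a : F) (ha : a ≠ 0) : ∀ m : ℕ, ν (a ^ m) = m * ν a := by
  intro m
  induction m with
  | zero => simpa using nu_one ν hmul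
  | succ m ih =>
      rw [pow_succ, hmul _ _ (pow_ne_zero _ ha) ha, ih]
      push_cast
      ring

private lemma nu_inv {F : Type} [Field F] (ν : F → ℤ)
    (hmul : ∀ a b : F, a ≠ 0 → b ≠ 0 → ν (a * b) = ν a + ν b)
    (a : F) (ha : a ≠ 0) : ν a⁻¹ = -ν a := by
  have h := hmul a a⁻¹ ha (inv_ne_zero ha)
  rw [mul_inv_cancel₀ ha, nu_one ν hmul] at h
  omega

private lemma nu_zpow {F : Type} [Field F] (ν : F → ℤ)
    (hmul : ∀ a b : F, a ≠ 0 → b ≠ 0 → ν (a * b) = ν a + ν b)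
    (a : F) (ha : a ≠ 0) : ∀ m : ℤ, ν (a ^ m) = m * ν a := by
  intro m
  cases m with
  | ofNat m =>
      rw [Int.ofNat_eq_natCast, zpow_natCast, nu_pow ν hmul a ha]
  | negSucc m =>
      rw [zpow_negSucc, nu_inv ν hmul _ (pow_ne_zero _ ha), nu_pow ν hmul a ha, Int.negSucc_eq]
      push_cast
      ring

/-- The valuation ring is integrally closed in `F`. -/
private lemma mem_of_isIntegral {F : Type} [Field F] (ν : F → ℤ)
    (hmul : ∀ a b : F, a ≠ 0 → b ≠ 0 → ν (a * b) = ν a + ν b)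
    (O : Subring F) (hO : ∀ x : F, x ∈ O ↔ x = 0 ∨ 0 ≤ ν x)
    (z : F) (hz : IsIntegral O z) : z ∈ O := by
  by_contra hzO
  have hz0 : z ≠ 0 := fun h => hzO ((hO z).mpr (Or.inl h))
  have hνz : ν z < 0 := by
    by_contra h
    exact hzO ((hO z).mpr (Or.inr (by omega)))
  have hinv : z⁻¹ ∈ O := (hO _).mpr (Or.inr (by rw [nu_inv ν hmul z hz0]; omega))
  obtain ⟨p, hmon, hp⟩ := hz
  set q : F[X] := p.map (algebraMap O F) with hqdef
  have hqmon : q.Monic := hmon.map _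
  have hcoeff : ∀ m : ℕ, q.coeff m ∈ O := fun m => by
    rw [hqdef, coeff_map]; exact SetLike.coe_mem _
  have hqz : (aeval z) q = 0 := by rw [hqdef, aeval_map_algebraMap]; exact hp
  set d := q.natDegree with hddef
  have hd : d ≠ 0 := by
    intro h
    rw [hqmon.natDegree_eq_zero.mp h] at hqz
    simp at hqz
  have hsum : z ^ d + ∑ i ∈ Finset.range d, q.coeff i * z ^ i = 0 := by
    have h0 := aeval_eq_sum_range (p := q) z
    rw [hqz, Finset.sum_range_succ, ← hddef, hqmon.coeff_natDegree] at h0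
    simp only [smul_eq_mul, one_mul] at h0
    rw [add_comm]
    exact h0.symm
  have hzd : z ^ d = -∑ i ∈ Finset.range d, q.coeff i * z ^ i := by
    linear_combination hsum
  have h1 : z = ∑ i ∈ Finset.range d, -q.coeff i * z⁻¹ ^ (d - 1 - i) := by
    have h2 : z = z ^ d * z⁻¹ ^ (d - 1) := by
      rw [inv_pow, ← pow_sub₀ z hz0 (by omega : d - 1 ≤ d), show d - (d - 1) = 1 by omega,
        pow_one]
    have hrhs : ∑ i ∈ Finset.range d, -q.coeff i * z⁻¹ ^ (d - 1 - i)
        = (-∑ i ∈ Finset.range d, q.coeff i * z ^ i) * z⁻¹ ^ (d - 1) := by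
      rw [neg_mul, Finset.sum_mul, ← Finset.sum_neg_distrib]
      refine Finset.sum_congr rfl fun i hi => ?_
      have hi' := Finset.mem_range.mp hi
      have h3 : z ^ i * z⁻¹ ^ (d - 1) = z⁻¹ ^ (d - 1 - i) := by
        have hsplit : d - 1 = i + (d - 1 - i) := by omega
        calc z ^ i * z⁻¹ ^ (d - 1) = z ^ i * (z⁻¹ ^ i * z⁻¹ ^ (d - 1 - i)) := by
              rw [← pow_add, ← hsplit]
          _ = (z * z⁻¹) ^ i * z⁻¹ ^ (d - 1 - i) := by rw [mul_pow]; ring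
          _ = z⁻¹ ^ (d - 1 - i) := by rw [mul_inv_cancel₀ hz0, one_pow, one_mul]
      rw [mul_assoc, h3]
      ring
    rw [hrhs, ← hzd]
    exact h2
  refine hzO ?_
  rw [h1]
  exact Subring.sum_mem O fun i _ =>
    Subring.mul_mem O (Subring.neg_mem O (hcoeff i)) (Subring.pow_mem O hinv _)

/-- If a power of `z` is the image of an element of `O`, then `z` is integral over `O`. -/
private lemma isIntegral_of_pow {F K : Type} [Field F] [Field K] [Algebra F K]
    (O : Subring F) (z : K) (m : ℕ) (hm : m ≠ 0) (s : F) (hs : s ∈ O)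
    (h : z ^ m = algebraMap F K s) : IsIntegral O z := by
  refine ⟨X ^ m - C ⟨s, hs⟩, monic_X_pow_sub_C _ hm, ?_⟩
  have hmap : (algebraMap O K) ⟨s, hs⟩ = algebraMap F K s := by
    rw [IsScalarTower.algebraMap_apply O F K]
    rfl
  show (aeval z) (X ^ m - C (⟨s, hs⟩ : O)) = 0
  rw [map_sub, map_pow, aeval_X, aeval_C, h, hmap, sub_self]

/-- Local integral bases in a radical function field `K = k(x,y)`, `y^n = D`:
for a place `𝔭` of `k(x)` with (additive, normalized) valuation `ν`, valuation ring `O` and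
uniformizer `π`, the family `(π^{-⌊i·ν(D)/n⌋}·y^i)_{i=0,…,n-1}` is an `O`-basis of the
integral closure of `O` in `K` (an element of `K` is integral over `O` iff it is an
`O`-linear combination of these elements, and they are `O`-linearly independent). -/
theorem stmt16 (k : Type) [Field k] (n : ℕ) (hn : 1 < n) (hchar : (n : k) ≠ 0)
    (D : RatFunc k) (hD : D ≠ 0)
    (hirr : Irreducible ((Polynomial.X : Polynomial (RatFunc k)) ^ n - Polynomial.C D))
    (K : Type) [Field K] [Algebra (RatFunc k) K]
    (y : K) (hy : y ^ n = algebraMap (RatFunc k) K D)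
    (hgen : Algebra.adjoin (RatFunc k) {y} = ⊤)
    -- `ν` is a normalized additive valuation on `k(x)`, trivial on constants
    (ν : RatFunc k → ℤ)
    (hmul : ∀ a b : RatFunc k, a ≠ 0 → b ≠ 0 → ν (a * b) = ν a + ν b)
    (hadd : ∀ a b : RatFunc k, a ≠ 0 → b ≠ 0 → a + b ≠ 0 → min (ν a) (ν b) ≤ ν (a + b))
    (hconst : ∀ c : k, c ≠ 0 → ν (RatFunc.C c) = 0)
    (hsurj : ∀ m : ℤ, ∃ x : RatFunc k, x ≠ 0 ∧ ν x = m)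
    (π : RatFunc k) (hπ0 : π ≠ 0) (hπ : ν π = 1)
    -- `O` is the valuation ring `o_𝔭` of `ν`
    (O : Subring (RatFunc k)) (hO : ∀ x : RatFunc k, x ∈ O ↔ x = 0 ∨ 0 ≤ ν x) :
    (∀ x : K,
      (∃ p : Polynomial (RatFunc k), p.Monic ∧ (∀ m : ℕ, p.coeff m ∈ O) ∧
          Polynomial.aeval x p = 0) ↔
      (∃ c : Fin n → RatFunc k, (∀ i, c i ∈ O) ∧
        x = ∑ i : Fin n, algebraMap (RatFunc k) K
              (c i * π ^ (-Int.fdiv ((i : ℤ) * ν D) (n : ℤ))) * y ^ (i : ℕ))) ∧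
    (∀ c : Fin n → RatFunc k,
      ∑ i : Fin n, algebraMap (RatFunc k) K
          (c i * π ^ (-Int.fdiv ((i : ℤ) * ν D) (n : ℤ))) * y ^ (i : ℕ) = 0 →
      ∀ i, c i = 0) := by
  classical
  have hn0 : n ≠ 0 := by omega
  have hnZ : (0:ℤ) < (n:ℤ) := by exact_mod_cast Nat.pos_of_ne_zero hn0
  -- the minimal polynomial of y
  set q : Polynomial (RatFunc k) := X ^ n - C D with hqdef
  have hqmonic : q.Monic := monic_X_pow_sub_C _ hn0
  have hroot : (aeval y) q = 0 := by
    rw [hqdef, map_sub, map_pow, aeval_X, aeval_C, hy, sub_self]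
  have hmin : q = minpoly (RatFunc k) y := minpoly.eq_of_irreducible_of_monic hirr hroot hqmonic
  have hyint : IsIntegral (RatFunc k) y := ⟨q, hqmonic, hroot⟩
  let pb0 := Algebra.adjoin.powerBasis hyint
  let e : (Algebra.adjoin (RatFunc k) ({y} : Set K)) ≃ₐ[RatFunc k] K :=
    (Subalgebra.equivOfEq _ _ hgen).trans Subalgebra.topEquiv
  let pb := pb0.map e
  have hgenpb : pb.gen = y := by
    show e pb0.gen = y
    rw [Algebra.adjoin.powerBasis_gen]
    rfl
  have hdim : pb.dim = n := by
    rw [PowerBasis.map_dim, Algebra.adjoin.powerBasis_dim, ← hmin, hqdef, natDegree_X_pow_sub_C]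
  let B : Module.Basis (Fin n) (RatFunc k) K := pb.basis.reindex (finCongr hdim)
  have hB : ∀ i : Fin n, B i = y ^ (i : ℕ) := by
    intro i
    rw [show B i = pb.basis ((finCongr hdim).symm i) from
      pb.basis.reindex_apply (finCongr hdim) i, PowerBasis.basis_eq_pow, hgenpb]
    simp
  -- basic valuation facts
  have hπpow : ∀ m : ℤ, ν (π ^ m) = m := fun m => by
    rw [nu_zpow ν hmul π hπ0 m, hπ, mul_one]
  have hCn : (RatFunc.C ((n:ℕ):k)) = ((n:ℕ) : RatFunc k) := map_natCast RatFunc.C n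
  have hnR : ((n:ℕ) : RatFunc k) ≠ 0 := by
    rw [← hCn]
    intro h
    exact hchar (RatFunc.C.injective (by rw [h, map_zero]))
  have hνn : ν ((n:ℕ) : RatFunc k) = 0 := by rw [← hCn]; exact hconst _ hchar
  have hninv : ((n:ℕ) : RatFunc k)⁻¹ ∈ O :=
    (hO _).mpr (Or.inr (by rw [nu_inv ν hmul _ hnR, hνn]; omega))
  -- linear independence
  have hindep : ∀ c : Fin n → RatFunc k,
      ∑ i : Fin n, algebraMap (RatFunc k) K
          (c i * π ^ (-Int.fdiv ((i : ℤ) * ν D) (n : ℤ))) * y ^ (i : ℕ) = 0 →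
      ∀ i, c i = 0 := by
    intro c hsum i
    have h0 : ∀ j : Fin n, (fun j : Fin n => c j * π ^ (-Int.fdiv ((j : ℤ) * ν D) (n : ℤ))) j = 0 := by
      apply Fintype.linearIndependent_iff.mp B.linearIndependent
      rw [← hsum]
      exact Finset.sum_congr rfl fun j _ => by rw [Algebra.smul_def, hB]
    rcases mul_eq_zero.mp (h0 i) with h | h
    · exact h
    · exact absurd h (zpow_ne_zero _ hπ0)
  -- representation implies integrality
  have hforward : ∀ x : K, (∃ c : Fin n → RatFunc k, (∀ i, c i ∈ O) ∧
      x = ∑ i : Fin n, algebraMap (RatFunc k) K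
          (c i * π ^ (-Int.fdiv ((i : ℤ) * ν D) (n : ℤ))) * y ^ (i : ℕ)) →
      IsIntegral O x := by
    rintro x ⟨c, hc, rfl⟩
    apply IsIntegral.sum
    intro i _
    rw [map_mul, mul_assoc]
    have h1 : IsIntegral O (algebraMap (RatFunc k) K (c i)) :=
      isIntegral_of_pow O _ 1 one_ne_zero (c i) (hc i) (by rw [pow_one])
    refine h1.mul ?_
    set f := Int.fdiv ((i:ℤ) * ν D) (n:ℤ) with hf
    refine isIntegral_of_pow O _ n hn0 ((π ^ (-f)) ^ n * D ^ (i:ℕ)) ?_ ?_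
    · refine (hO _).mpr (Or.inr ?_)
      rw [hmul _ _ (pow_ne_zero _ (zpow_ne_zero _ hπ0)) (pow_ne_zero _ hD),
          nu_pow ν hmul _ (zpow_ne_zero _ hπ0), hπpow, nu_pow ν hmul _ hD]
      have hle : f * (n:ℤ) ≤ (i:ℤ) * ν D := by
        rw [hf, Int.fdiv_eq_ediv_of_nonneg _ (le_of_lt hnZ)]
        exact (Int.le_ediv_iff_mul_le hnZ).mp le_rfl
      linarith
    · have h2 : (y ^ (i:ℕ)) ^ n = (algebraMap (RatFunc k) K D) ^ (i:ℕ) := by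
        rw [← pow_mul, mul_comm, pow_mul, hy]
      rw [mul_pow, h2, ← map_pow, ← map_pow, ← map_mul]
  -- setup for the converse: conjugation in an algebraic closure
  have hnΩ : ((n:ℕ) : AlgebraicClosure K) ≠ 0 := by
    intro h
    apply hnR
    apply (algebraMap (RatFunc k) (AlgebraicClosure K)).injective
    rw [map_natCast, map_zero]
    exact h
  haveI : NeZero ((n:ℕ) : AlgebraicClosure K) := ⟨hnΩ⟩
  obtain ⟨ζ, hζ⟩ := HasEnoughRootsOfUnity.exists_primitiveRoot (AlgebraicClosure K) n
  have hζn : ζ ^ n = 1 := hζ.pow_eq_one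
  have hζ0 : ζ ≠ 0 := hζ.ne_zero hn0
  set ξ := ζ⁻¹ with hξ
  have hξn : ξ ^ n = 1 := by rw [hξ, inv_pow, hζn, inv_one]
  set y' := algebraMap K (AlgebraicClosure K) y with hy'
  have hy'n : y' ^ n = algebraMap (RatFunc k) (AlgebraicClosure K) D := by
    rw [hy', ← map_pow, hy, ← IsScalarTower.algebraMap_apply]
  have hroots : ∀ j : ℕ, (aeval (ζ ^ j * y')) (minpoly (RatFunc k) pb.gen) = 0 := by
    intro j
    rw [hgenpb, ← hmin, hqdef, map_sub, map_pow, aeval_X, aeval_C, mul_pow, ← pow_mul,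
        mul_comm j n, pow_mul, hζn, one_pow, one_mul, hy'n, sub_self]
  set σ : ℕ → (K →ₐ[RatFunc k] AlgebraicClosure K) :=
    fun j => pb.lift (ζ ^ j * y') (hroots j) with hσ
  have hσy : ∀ j, σ j y = ζ ^ j * y' := fun j => by
    have h := pb.lift_gen (ζ ^ j * y') (hroots j)
    rwa [hgenpb] at h
  -- integrality implies representation
  have hbackward : ∀ x : K, IsIntegral O x → ∃ c : Fin n → RatFunc k, (∀ i, c i ∈ O) ∧
      x = ∑ i : Fin n, algebraMap (RatFunc k) K
          (c i * π ^ (-Int.fdiv ((i : ℤ) * ν D) (n : ℤ))) * y ^ (i : ℕ) := by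
    intro x hxint
    have hxsum : x = ∑ m : Fin n, algebraMap (RatFunc k) K (B.repr x m) * y ^ (m:ℕ) := by
      conv_lhs => rw [← B.sum_repr x]
      exact Finset.sum_congr rfl fun m _ => by rw [Algebra.smul_def, hB]
    have hkey : ∀ i : Fin n, B.repr x i ≠ 0 → 0 ≤ (n:ℤ) * ν (B.repr x i) + (i:ℤ) * ν D := by
      intro i hai
      have hσx : ∀ j : ℕ, σ j x = ∑ m : Fin n,
          algebraMap (RatFunc k) (AlgebraicClosure K) (B.repr x m) * (ζ ^ j * y') ^ (m:ℕ) := by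
        intro j
        conv_lhs => rw [hxsum]
        rw [map_sum]
        refine Finset.sum_congr rfl fun m _ => ?_
        rw [map_mul, map_pow, hσy j]
        congr 1
        exact AlgHom.commutes _ _
      set T : AlgebraicClosure K := ∑ j ∈ Finset.range n, ξ ^ ((i:ℕ) * j) * σ j x with hT
      have hTint : IsIntegral O T := by
        apply IsIntegral.sum
        intro j _
        refine IsIntegral.mul ?_ (hxint.map (σ j))
        refine isIntegral_of_pow O _ n hn0 1 O.one_mem ?_
        rw [← pow_mul, mul_comm ((i:ℕ) * j) n, pow_mul, hξn, one_pow, map_one]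
      have hTval : T = (n : AlgebraicClosure K) *
          (algebraMap (RatFunc k) (AlgebraicClosure K) (B.repr x i) * y' ^ (i:ℕ)) := by
        rw [hT]
        have step1 : ∀ j ∈ Finset.range n, ξ ^ ((i:ℕ) * j) * σ j x
            = ∑ m : Fin n, (ξ ^ (i:ℕ) * ζ ^ (m:ℕ)) ^ j *
                (algebraMap (RatFunc k) (AlgebraicClosure K) (B.repr x m) * y' ^ (m:ℕ)) := by
          intro j _
          rw [hσx j, Finset.mul_sum]
          refine Finset.sum_congr rfl fun m _ => ?_
          ring
        rw [Finset.sum_congr rfl step1, Finset.sum_comm]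
        have step2 : ∀ m : Fin n,
            ∑ j ∈ Finset.range n, (ξ ^ (i:ℕ) * ζ ^ (m:ℕ)) ^ j *
                (algebraMap (RatFunc k) (AlgebraicClosure K) (B.repr x m) * y' ^ (m:ℕ))
            = (if m = i then (n : AlgebraicClosure K) else 0) *
                (algebraMap (RatFunc k) (AlgebraicClosure K) (B.repr x m) * y' ^ (m:ℕ)) := by
          intro m
          rw [← Finset.sum_mul]
          congr 1
          by_cases hmi : m = i
          · rw [if_pos hmi, hmi]
            have hone : ξ ^ (i:ℕ) * ζ ^ (i:ℕ) = 1 := by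
              rw [hξ, ← mul_pow, inv_mul_cancel₀ hζ0, one_pow]
            rw [hone]
            simp
          · rw [if_neg hmi]
            set μ := ξ ^ (i:ℕ) * ζ ^ (m:ℕ) with hμ
            have hμn : μ ^ n = 1 := by
              rw [hμ, mul_pow, ← pow_mul, ← pow_mul, mul_comm (i:ℕ) n, mul_comm (m:ℕ) n,
                pow_mul, pow_mul, hξn, hζn, one_pow, one_pow, one_mul]
            have hμ1 : μ ≠ 1 := by
              intro h
              rw [hμ] at h
              apply hmi
              apply Fin.ext
              apply hζ.pow_inj m.2 i.2
              calc ζ ^ (m:ℕ) = (ζ ^ (i:ℕ) * ξ ^ (i:ℕ)) * ζ ^ (m:ℕ) := by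
                    rw [hξ, ← mul_pow, mul_inv_cancel₀ hζ0, one_pow, one_mul]
                _ = ζ ^ (i:ℕ) * (ξ ^ (i:ℕ) * ζ ^ (m:ℕ)) := by ring
                _ = ζ ^ (i:ℕ) := by rw [h, mul_one]
            have hgeom := geom_sum_mul μ n
            rw [hμn, sub_self] at hgeom
            rcases mul_eq_zero.mp hgeom with h | h
            · exact h
            · exact absurd (sub_eq_zero.mp h) hμ1
        rw [Finset.sum_congr rfl (fun m _ => step2 m),
          Finset.sum_eq_single i (fun b _ hb => by rw [if_neg hb, zero_mul])
            (fun h => absurd (Finset.mem_univ i) h), if_pos rfl]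
      have hw : algebraMap (RatFunc k) (AlgebraicClosure K) (((n:ℕ):RatFunc k)⁻¹) * T
          = algebraMap (RatFunc k) (AlgebraicClosure K) (B.repr x i) * y' ^ (i:ℕ) := by
        rw [hTval, ← mul_assoc]
        have hcancel : algebraMap (RatFunc k) (AlgebraicClosure K) (((n:ℕ):RatFunc k)⁻¹) *
            ((n:ℕ) : AlgebraicClosure K) = 1 := by
          rw [show ((n:ℕ) : AlgebraicClosure K)
              = algebraMap (RatFunc k) (AlgebraicClosure K) ((n:ℕ):RatFunc k) from
              (map_natCast _ n).symm, ← map_mul, inv_mul_cancel₀ hnR, map_one]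
        rw [hcancel, one_mul]
      have hwint : IsIntegral O
          (algebraMap (RatFunc k) (AlgebraicClosure K) (B.repr x i) * y' ^ (i:ℕ)) := by
        rw [← hw]
        exact (isIntegral_of_pow O _ 1 one_ne_zero _ hninv (by rw [pow_one])).mul hTint
      have hwnint : IsIntegral O
          (algebraMap (RatFunc k) (AlgebraicClosure K) (((B.repr x i : RatFunc k)) ^ n * D ^ (i:ℕ))) := by
        have h2 : (algebraMap (RatFunc k) (AlgebraicClosure K) (B.repr x i) * y' ^ (i:ℕ)) ^ n
            = algebraMap (RatFunc k) (AlgebraicClosure K) (((B.repr x i : RatFunc k)) ^ n * D ^ (i:ℕ)) := by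
          rw [mul_pow, ← pow_mul, mul_comm (i:ℕ) n, pow_mul, hy'n,
            ← map_pow (algebraMap (RatFunc k) (AlgebraicClosure K)) (B.repr x i) n,
            ← map_pow (algebraMap (RatFunc k) (AlgebraicClosure K)) D (i:ℕ), ← map_mul]
        rw [← h2]
        exact hwint.pow n
      have hmem : ((B.repr x i : RatFunc k)) ^ n * D ^ (i:ℕ) ∈ O :=
        mem_of_isIntegral ν hmul O hO _
          ((isIntegral_algebraMap_iff
            ((algebraMap (RatFunc k) (AlgebraicClosure K)).injective)).mp hwnint)
      rcases (hO _).mp hmem with h | h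
      · exact absurd h (mul_ne_zero (pow_ne_zero _ hai) (pow_ne_zero _ hD))
      · rw [hmul _ _ (pow_ne_zero _ hai) (pow_ne_zero _ hD), nu_pow ν hmul _ hai,
          nu_pow ν hmul _ hD] at h
        exact h
    refine ⟨fun i => B.repr x i * π ^ (Int.fdiv ((i:ℤ) * ν D) (n:ℤ)), fun i => ?_, ?_⟩
    · show B.repr x i * π ^ (Int.fdiv ((i:ℤ) * ν D) (n:ℤ)) ∈ O
      by_cases hai : B.repr x i = 0
      · rw [hai, zero_mul]; exact O.zero_mem
      · refine (hO _).mpr (Or.inr ?_)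
        rw [hmul _ _ hai (zpow_ne_zero _ hπ0), hπpow]
        have h := hkey i hai
        rw [Int.fdiv_eq_ediv_of_nonneg _ (le_of_lt hnZ)]
        have h2 : -ν (B.repr x i) ≤ ((i:ℤ) * ν D) / (n:ℤ) :=
          (Int.le_ediv_iff_mul_le hnZ).mpr (by linarith)
        omega
    · conv_lhs => rw [hxsum]
      refine Finset.sum_congr rfl fun i _ => ?_
      congr 2
      rw [mul_assoc, ← zpow_add₀ hπ0, add_neg_cancel, zpow_zero, mul_one]
  refine ⟨fun x => ⟨?_, ?_⟩, hindep⟩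
  · rintro ⟨p, pmon, pcoeff, proot⟩
    apply hbackward
    have hsub : ↑p.coeffs ⊆ (O : Set (RatFunc k)) := by
      intro c hc
      obtain ⟨m, _, rfl⟩ := Polynomial.mem_coeffs_iff.mp hc
      exact pcoeff m
    refine ⟨p.toSubring O hsub, (Polynomial.monic_toSubring _ _ _).mpr pmon, ?_⟩
    have hmapts := Polynomial.map_toSubring p O hsub
    show (aeval x) (p.toSubring O hsub) = 0
    rw [← Polynomial.aeval_map_algebraMap (RatFunc k) x (p.toSubring O hsub),
      show (algebraMap O (RatFunc k)) = O.subtype from rfl, hmapts]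
    exact proot
  · intro hc
    obtain ⟨p', mon, hp'⟩ := hforward x hc
    exact ⟨p'.map (algebraMap O (RatFunc k)), mon.map _,
      fun m => by rw [coeff_map]; exact SetLike.coe_mem _,
      by rw [aeval_map_algebraMap]; exact hp'⟩
end

section
/- Let K = k(x, y) with y^n = D ∈ k(x)^*, n coprime to char k and Y^n - D irreducible. Write the squarefree decomposition D = sgn(D)·∏_{i∈ℤ} f_i^i with pairwise coprime squarefree monic f_i ∈ k[x], almost all equal to 1, and set D_i = ∏_{j∈ℤ} f_j^{⌊i·j/n⌋} for 0 ≤ i ≤ n-1. Then D_0 = 1 and (1, y/D_1, y²/D_2, …, y^{n-1}/D_{n-1}) is a k[x]-basis of the integral closure O of k[x] in K. -/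
open Polynomial in
lemma auxA {F : Type} [Field F] (n : ℕ) (S : Finset ℤ) (f : ℤ → Polynomial F)
    (hsq : ∀ j, Squarefree (f j))
    (hcop : ∀ j₁ j₂, j₁ ≠ j₂ → IsCoprime (f j₁) (f j₂))
    (ρ : ℤ → ℕ) (hρ : ∀ j, ρ j < n) (q : Polynomial F)
    (hq : q ^ n ∣ ∏ j ∈ S, f j ^ ρ j) : IsUnit q := by
  have hfne : ∀ j, f j ≠ 0 := fun j => (hsq j).ne_zero
  by_contra hu
  have hn0' : 0 < n := lt_of_le_of_lt (Nat.zero_le _) (hρ 0)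
  have hq0 : q ≠ 0 := by
    rintro rfl
    rw [zero_pow hn0'.ne', zero_dvd_iff] at hq
    exact (Finset.prod_ne_zero_iff.mpr (fun j _ => pow_ne_zero _ (hfne j))) hq
  obtain ⟨ℓ, hirr, hdvd⟩ := WfDvdMonoid.exists_irreducible_factor hu hq0
  have hprime : Prime ℓ := hirr.prime
  have hn0 : 0 < n := lt_of_le_of_lt (Nat.zero_le _) (hρ 0)
  have hln : ℓ ^ n ∣ ∏ j ∈ S, f j ^ ρ j := dvd_trans (pow_dvd_pow_of_dvd hdvd n) hq
  have hl1 : ℓ ∣ ∏ j ∈ S, f j ^ ρ j := dvd_trans (dvd_pow_self ℓ hn0.ne') hln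
  obtain ⟨j₀, hj₀S, hj₀⟩ := hprime.exists_mem_finset_dvd hl1
  have hρ0 : ρ j₀ ≠ 0 := by
    rintro h; rw [h, pow_zero] at hj₀; exact hprime.not_unit (isUnit_of_dvd_one hj₀)
  have hlf : ℓ ∣ f j₀ := hprime.dvd_of_dvd_pow hj₀
  -- split product
  rw [← Finset.mul_prod_erase S _ hj₀S] at hln
  have hcop' : IsCoprime (ℓ ^ n) (∏ j ∈ S.erase j₀, f j ^ ρ j) := by
    apply IsCoprime.pow_left
    rw [hirr.coprime_iff_not_dvd]
    intro hdl
    obtain ⟨j₁, hj₁S, hj₁⟩ := hprime.exists_mem_finset_dvd hdl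
    have hlf1 : ℓ ∣ f j₁ := hprime.dvd_of_dvd_pow hj₁
    exact hprime.not_unit (((hcop j₀ j₁ (Finset.ne_of_mem_erase hj₁S).symm).isUnit_of_dvd' hlf hlf1))
  have hl2 : ℓ ^ n ∣ f j₀ ^ ρ j₀ := hcop'.dvd_of_dvd_mul_right hln
  obtain ⟨h, hfh⟩ := hlf
  have hlh : ¬ ℓ ∣ h := by
    intro hd
    exact hprime.not_unit ((hsq j₀) ℓ (by obtain ⟨t, rfl⟩ := hd; rw [hfh]; ring_nf; exact ⟨t, by ring⟩))
  have hl3 : ℓ ^ n ∣ ℓ ^ ρ j₀ * h ^ ρ j₀ := by rw [← mul_pow, ← hfh]; exact hl2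
  have : ℓ ^ (ρ j₀) * ℓ ^ (n - ρ j₀) ∣ ℓ ^ ρ j₀ * h ^ ρ j₀ := by
    rw [← pow_add, Nat.add_sub_cancel' (le_of_lt (hρ j₀))]; exact hl3
  have hl4 : ℓ ^ (n - ρ j₀) ∣ h ^ ρ j₀ :=
    (mul_dvd_mul_iff_left (pow_ne_zero _ hprime.ne_zero)).mp this
  have : ℓ ∣ h ^ ρ j₀ := dvd_trans (dvd_pow_self ℓ (Nat.sub_ne_zero_of_lt (hρ j₀))) hl4
  exact hlh (hprime.dvd_of_dvd_pow this)

open Polynomial in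
lemma auxB {F : Type} [Field F] (n : ℕ) (S : Finset ℤ) (f : ℤ → Polynomial F)
    (hsq : ∀ j, Squarefree (f j))
    (hcop : ∀ j₁ j₂, j₁ ≠ j₂ → IsCoprime (f j₁) (f j₂))
    (ρ : ℤ → ℕ) (hρ : ∀ j, ρ j < n)
    (w : F) (hw : w ≠ 0) (b : RatFunc F) (p : Polynomial F)
    (h : b ^ n * (RatFunc.C w * algebraMap (Polynomial F) (RatFunc F) (∏ j ∈ S, f j ^ ρ j))
        = algebraMap _ _ p) :
    ∃ c : Polynomial F, b = algebraMap _ _ c := by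
  set E := ∏ j ∈ S, f j ^ ρ j with hE
  have hb : b = algebraMap _ _ b.num / algebraMap _ _ b.denom := (RatFunc.num_div_denom b).symm
  have hQ0 : (algebraMap (Polynomial F) (RatFunc F)) b.denom ≠ 0 :=
    RatFunc.algebraMap_ne_zero (RatFunc.denom_ne_zero b)
  have hinj := RatFunc.algebraMap_injective F
  have hPQ := RatFunc.num_div_denom b
  rw [div_eq_iff hQ0] at hPQ
  have key : b.num ^ n * (Polynomial.C w * E) = p * b.denom ^ n := by
    apply hinj
    calc (algebraMap (Polynomial F) (RatFunc F)) (b.num ^ n * (Polynomial.C w * E))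
        = (b * algebraMap _ _ b.denom) ^ n * (RatFunc.C w * algebraMap _ _ E) := by
          rw [map_mul, map_pow, hPQ, map_mul, RatFunc.algebraMap_C]
      _ = (b ^ n * (RatFunc.C w * algebraMap _ _ E)) * (algebraMap _ _ b.denom) ^ n := by ring
      _ = algebraMap _ _ p * (algebraMap _ _ b.denom) ^ n := by rw [h]
      _ = algebraMap _ _ (p * b.denom ^ n) := by rw [map_mul, map_pow]
  have hdvd : b.denom ^ n ∣ b.num ^ n * (Polynomial.C w * E) := ⟨p, by rw [key]; ring⟩
  have hcopQP : IsCoprime (b.denom ^ n) (b.num ^ n) :=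
    ((RatFunc.isCoprime_num_denom b).symm).pow
  have hdvd2 : b.denom ^ n ∣ Polynomial.C w * E := hcopQP.dvd_of_dvd_mul_left hdvd
  have hdvd3 : b.denom ^ n ∣ E := (isUnit_C.mpr hw.isUnit).dvd_mul_left.mp hdvd2
  have hu : IsUnit b.denom := auxA n S f hsq hcop ρ hρ _ hdvd3
  have h1 : b.denom = 1 := (RatFunc.monic_denom b).eq_one_of_isUnit hu
  refine ⟨b.num, ?_⟩
  conv_lhs => rw [hb]
  rw [h1, map_one, div_one]


open Polynomial in
lemma auxE {F : Type} [Field F] (n : ℕ) (hn : 0 < n) (S : Finset ℤ) (f : ℤ → Polynomial F)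
    (hne : ∀ j, f j ≠ 0) (sgn : F) (D : RatFunc F)
    (hD : D = RatFunc.C sgn * ∏ j ∈ S, (algebraMap (Polynomial F) (RatFunc F) (f j)) ^ j)
    (Di : RatFunc F) (i : ℕ)
    (hDi : Di = ∏ j ∈ S,
      (algebraMap (Polynomial F) (RatFunc F) (f j)) ^ Int.fdiv ((i : ℤ) * j) (n : ℤ)) :
    D ^ i = Di ^ n * (RatFunc.C (sgn ^ i) *
      algebraMap _ _ (∏ j ∈ S, f j ^ ((((i : ℤ)) * j).fmod (n : ℤ)).toNat)) := by
  have hx : ∀ j, (algebraMap (Polynomial F) (RatFunc F)) (f j) ≠ 0 :=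
    fun j => RatFunc.algebraMap_ne_zero (hne j)
  rw [hD, hDi, map_prod, map_pow, mul_pow, ← Finset.prod_pow, ← Finset.prod_pow]
  simp only [map_pow]
  rw [mul_left_comm, ← Finset.prod_mul_distrib]
  congr 1
  refine Finset.prod_congr rfl (fun j _ => ?_)
  have h1 : ((algebraMap (Polynomial F) (RatFunc F)) (f j) ^ (j : ℤ)) ^ (i : ℕ)
      = (algebraMap (Polynomial F) (RatFunc F)) (f j) ^ ((i : ℤ) * j) := by
    rw [← zpow_natCast _ i, ← zpow_mul, mul_comm]
  have h2 : ((algebraMap (Polynomial F) (RatFunc F)) (f j) ^ (((i : ℤ) * j).fdiv (n:ℤ))) ^ (n : ℕ)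
      = (algebraMap (Polynomial F) (RatFunc F)) (f j) ^ ((n : ℤ) * ((i : ℤ) * j).fdiv (n:ℤ)) := by
    rw [← zpow_natCast _ n, ← zpow_mul, mul_comm]
  have h3 : (algebraMap (Polynomial F) (RatFunc F)) (f j) ^ ((((i : ℤ) * j).fmod (n:ℤ)).toNat)
      = (algebraMap (Polynomial F) (RatFunc F)) (f j) ^ (((i : ℤ) * j).fmod (n:ℤ)) := by
    rw [← zpow_natCast]
    congr 1
    exact Int.toNat_of_nonneg (Int.fmod_nonneg_of_pos _ (by exact_mod_cast hn))
  rw [h1, h2, h3, ← zpow_add₀ (hx j), Int.mul_fdiv_add_fmod]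


noncomputable section Aux17
open Polynomial RatFunc nonZeroDivisors

variable {F F' : Type} [Field F] [Field F'] (φ : F →+* F')

def polyMap : Polynomial F →+* Polynomial F' := Polynomial.mapRingHom φ

lemma polyMap_inj : Function.Injective (polyMap φ) :=
  Polynomial.map_injective φ φ.injective

lemma polyMap_cond : (Polynomial F)⁰ ≤ (Polynomial F')⁰.comap (polyMap φ) := by
  intro p hp
  simp only [Submonoid.mem_comap]
  rw [mem_nonZeroDivisors_iff_ne_zero] at hp ⊢
  exact fun h => hp (polyMap_inj φ (by rw [h, map_zero]))

def Phi : RatFunc F →+* RatFunc F' := RatFunc.mapRingHom (polyMap φ) (polyMap_cond φ)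

lemma Phi_div (p q : Polynomial F) :
    Phi φ (algebraMap _ _ p / algebraMap _ _ q)
      = algebraMap _ _ (polyMap φ p) / algebraMap _ _ (polyMap φ q) := by
  have h := RatFunc.coe_mapRingHom_eq_coe_map (polyMap φ) (polyMap_cond φ)
  show (RatFunc.mapRingHom (polyMap φ) (polyMap_cond φ) : RatFunc F → RatFunc F') _ = _
  rw [h, RatFunc.map_apply_div]

lemma Phi_algebraMap (p : Polynomial F) :
    Phi φ (algebraMap _ _ p) = algebraMap _ _ (polyMap φ p) := by
  have h := Phi_div φ p 1
  simpa using h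

lemma Phi_descent (s : RatFunc F) (t : Polynomial F')
    (h : Phi φ s = algebraMap _ _ t) : ∃ c : Polynomial F, s = algebraMap _ _ c := by
  have hb := RatFunc.num_div_denom s
  have h2 : algebraMap (Polynomial F') (RatFunc F') t
      = algebraMap _ _ (polyMap φ s.num) / algebraMap _ _ (polyMap φ s.denom) := by
    rw [← h]
    conv_lhs => rw [← hb]
    rw [Phi_div]
  have hQ' : (polyMap φ s.denom) ≠ 0 :=
    fun h0 => RatFunc.denom_ne_zero s (polyMap_inj φ (by rw [h0, map_zero]))
  have hQ0 : (algebraMap (Polynomial F') (RatFunc F')) (polyMap φ s.denom) ≠ 0 :=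
    RatFunc.algebraMap_ne_zero hQ'
  rw [eq_div_iff hQ0, ← map_mul] at h2
  have h3 : t * polyMap φ s.denom = polyMap φ s.num :=
    IsFractionRing.injective (Polynomial F') (RatFunc F') h2
  have hdvd : polyMap φ s.denom ∣ polyMap φ s.num := ⟨t, by rw [← h3]; ring⟩
  have hcop : IsCoprime (polyMap φ s.num) (polyMap φ s.denom) :=
    (RatFunc.isCoprime_num_denom s).map (polyMap φ)
  have hu : IsUnit (polyMap φ s.denom) := hcop.isUnit_of_dvd' hdvd dvd_rfl
  have hmm : polyMap φ s.denom = s.denom.map φ := rfl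
  have h1 : polyMap φ s.denom = 1 := by
    rw [hmm] at hu ⊢
    exact ((RatFunc.monic_denom s).map φ).eq_one_of_isUnit hu
  have hd1 : s.denom = 1 := polyMap_inj φ (by rw [h1, map_one])
  refine ⟨s.num, ?_⟩
  conv_lhs => rw [← hb, hd1, map_one, div_one]

open scoped Classical in
lemma auxD {F : Type} [Field F] {n : ℕ} {u : F} (hu : u ^ n = 1) :
    ∑ l ∈ Finset.range n, u ^ l = if u = 1 then (n : F) else 0 := by
  split_ifs with h
  · simp [h]
  · rw [geom_sum_eq h n, hu]; simp

set_option maxHeartbeats 1000000 in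
open scoped Classical in
lemma auxHard (k : Type) [Field k] (n : ℕ) (hn0 : 0 < n) (hchar : (n : k) ≠ 0)
    (D : RatFunc k) (K : Type) [Field K] [Algebra (RatFunc k) K] [Algebra (Polynomial k) K]
    [IsScalarTower (Polynomial k) (RatFunc k) K]
    (y : K) (pb : PowerBasis (RatFunc k) K) (hgen : pb.gen = y)
    (hmin : minpoly (RatFunc k) y = Polynomial.X ^ n - Polynomial.C D)
    (a : Fin n → RatFunc k) (z : K) (hz : IsIntegral (Polynomial k) z)
    (hrep : z = ∑ m : Fin n, algebraMap (RatFunc k) K (a m) * y ^ (m : ℕ)) :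
    ∀ i : Fin n, ∃ p : Polynomial k, (a i) ^ n * D ^ (i : ℕ) = algebraMap _ _ p := by
  intro i
  set k' := AlgebraicClosure k with hk'
  set φ : k →+* k' := algebraMap k k' with hφ
  have hn' : (n : k') ≠ 0 := by
    have h1 : (n : k') = φ (n : k) := by rw [map_natCast]
    rw [h1]
    exact fun h => hchar (φ.injective (by rwa [map_zero]))
  haveI : NeZero ((n : k')) := ⟨hn'⟩
  obtain ⟨ζ, hζ⟩ := HasEnoughRootsOfUnity.exists_primitiveRoot k' n
  set Φ : RatFunc k →+* RatFunc k' := Phi φ with hΦ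
  set D' : RatFunc k' := Φ D with hD'
  set g : Polynomial (RatFunc k') := Polynomial.X ^ n - Polynomial.C D' with hg
  have hgdeg : g.degree ≠ 0 := by
    rw [hg, Polynomial.degree_X_pow_sub_C hn0]
    exact_mod_cast hn0.ne'
  haveI : Nontrivial (AdjoinRoot g) := AdjoinRoot.nontrivial g hgdeg
  have hAinj : Function.Injective (algebraMap (RatFunc k') (AdjoinRoot g)) :=
    (algebraMap (RatFunc k') (AdjoinRoot g)).injective
  set r0 : AdjoinRoot g := AdjoinRoot.root g with hr0def
  have hr0 : r0 ^ n = algebraMap (RatFunc k') (AdjoinRoot g) D' := by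
    rw [AdjoinRoot.algebraMap_eq]
    exact root_X_pow_sub_C_pow n D'
  letI : Algebra (RatFunc k) (AdjoinRoot g) :=
    ((algebraMap (RatFunc k') (AdjoinRoot g)).comp Φ).toAlgebra
  have halg : algebraMap (RatFunc k) (AdjoinRoot g)
      = (algebraMap (RatFunc k') (AdjoinRoot g)).comp Φ := rfl
  have haev : Polynomial.aeval r0 (minpoly (RatFunc k) pb.gen) = 0 := by
    rw [hgen, hmin]
    simp only [map_sub, map_pow, Polynomial.aeval_X, Polynomial.aeval_C, sub_eq_zero]
    rw [hr0, halg, RingHom.comp_apply]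
  set ψ : K →ₐ[RatFunc k] AdjoinRoot g := pb.lift r0 haev with hψdef
  have hψy : ψ y = r0 := by rw [← hgen]; exact pb.lift_gen r0 haev
  letI : Algebra (Polynomial k') (AdjoinRoot g) :=
    ((algebraMap (RatFunc k') (AdjoinRoot g)).comp
      (algebraMap (Polynomial k') (RatFunc k'))).toAlgebra
  have halg2 : algebraMap (Polynomial k') (AdjoinRoot g)
      = (algebraMap (RatFunc k') (AdjoinRoot g)).comp
        (algebraMap (Polynomial k') (RatFunc k')) := rfl
  have hcomm : (ψ : K →+* AdjoinRoot g).comp (algebraMap (Polynomial k) K)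
      = (algebraMap (Polynomial k') (AdjoinRoot g)).comp (polyMap φ) := by
    apply RingHom.ext
    intro p
    rw [RingHom.comp_apply, RingHom.comp_apply,
      IsScalarTower.algebraMap_apply (Polynomial k) (RatFunc k) K]
    have h1 : (ψ : K →+* AdjoinRoot g) (algebraMap (RatFunc k) K
        (algebraMap (Polynomial k) (RatFunc k) p))
        = algebraMap (RatFunc k) (AdjoinRoot g) (algebraMap (Polynomial k) (RatFunc k) p) :=
      ψ.commutes _
    rw [h1, halg, RingHom.comp_apply, Phi_algebraMap, halg2, RingHom.comp_apply]
  have hψz : IsIntegral (Polynomial k') (ψ z) := by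
    obtain ⟨P, hPm, hPe⟩ := hz
    refine ⟨P.map (polyMap φ), hPm.map _, ?_⟩
    rw [Polynomial.eval₂_map, ← hcomm]
    have h3 := Polynomial.hom_eval₂ P (algebraMap (Polynomial k) K)
      (ψ : K →+* AdjoinRoot g) z
    rw [hPe, map_zero] at h3
    exact h3.symm
  have hτaev : ∀ l : ℕ,
      Polynomial.aeval (algebraMap (RatFunc k') (AdjoinRoot g) (RatFunc.C (ζ ^ l)) * r0) g = 0 := by
    intro l
    show Polynomial.aeval (algebraMap (RatFunc k') (AdjoinRoot g) (RatFunc.C (ζ ^ l)) * r0)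
      (Polynomial.X ^ n - Polynomial.C D') = 0
    simp only [map_sub, map_pow, Polynomial.aeval_X, Polynomial.aeval_C, sub_eq_zero]
    rw [mul_pow, ← map_pow, ← map_pow, ← pow_mul, mul_comm l n, pow_mul, ← map_pow,
      hζ.pow_eq_one, map_one, one_pow, map_one, one_mul, hr0]
  set τ : ℕ → (AdjoinRoot g →ₐ[RatFunc k'] AdjoinRoot g) :=
    fun l => AdjoinRoot.liftAlgHom g (Algebra.ofId _ _) _ (hτaev l) with hτdef
  have hτr : ∀ l, τ l r0 = algebraMap _ _ (RatFunc.C (ζ ^ l)) * r0 :=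
    fun l => AdjoinRoot.liftAlgHom_root _ _ _ _
  have hτalg : ∀ l (c : RatFunc k'), τ l (algebraMap (RatFunc k') (AdjoinRoot g) c)
      = algebraMap _ _ c := fun l c => (τ l).commutes c
  have hτint : ∀ l, ∀ t : AdjoinRoot g, IsIntegral (Polynomial k') t
      → IsIntegral (Polynomial k') (τ l t) := by
    intro l t ht
    obtain ⟨Q, hQm, hQe⟩ := ht
    refine ⟨Q, hQm, ?_⟩
    have h2 : ((τ l : AdjoinRoot g →+* AdjoinRoot g)).comp
        (algebraMap (Polynomial k') (AdjoinRoot g))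
        = algebraMap (Polynomial k') (AdjoinRoot g) := by
      apply RingHom.ext
      intro q
      rw [RingHom.comp_apply, halg2, RingHom.comp_apply]
      exact hτalg l _
    rw [← h2]
    have h3 := Polynomial.hom_eval₂ Q (algebraMap (Polynomial k') (AdjoinRoot g))
      (τ l : AdjoinRoot g →+* AdjoinRoot g) t
    rw [hQe, map_zero] at h3
    exact h3.symm
  have hψrep : ψ z = ∑ m : Fin n,
      algebraMap (RatFunc k') (AdjoinRoot g) (Φ (a m)) * r0 ^ (m : ℕ) := by
    rw [hrep, map_sum]
    refine Finset.sum_congr rfl (fun m _ => ?_)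
    rw [map_mul, map_pow, hψy]
    congr 1
    exact ψ.commutes (a m)
  have hτz : ∀ l, τ l (ψ z) = ∑ m : Fin n,
      algebraMap (RatFunc k') (AdjoinRoot g) (Φ (a m) * RatFunc.C (ζ ^ (l * (m : ℕ))))
        * r0 ^ (m : ℕ) := by
    intro l
    rw [hψrep, map_sum]
    refine Finset.sum_congr rfl (fun m _ => ?_)
    rw [map_mul, map_pow, hτr l, hτalg, mul_pow, ← map_pow, ← map_pow, ← pow_mul, map_mul]
    ring
  set Si : AdjoinRoot g := ∑ l ∈ Finset.range n,
    algebraMap (RatFunc k') (AdjoinRoot g) (RatFunc.C (((ζ ^ (i : ℕ))⁻¹) ^ l)) * τ l (ψ z)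
    with hSidef
  have hζ0 : ζ ≠ 0 := hζ.ne_zero hn0.ne'
  have hterm : ∀ m : Fin n, ∑ l ∈ Finset.range n,
      algebraMap (RatFunc k') (AdjoinRoot g) (RatFunc.C (((ζ ^ (i : ℕ))⁻¹) ^ l))
        * (algebraMap (RatFunc k') (AdjoinRoot g)
            (Φ (a m) * RatFunc.C (ζ ^ (l * (m : ℕ)))) * r0 ^ (m : ℕ))
      = algebraMap (RatFunc k') (AdjoinRoot g)
          (RatFunc.C (if (m : ℕ) = (i : ℕ) then (n : k') else 0) * Φ (a m)) * r0 ^ (m : ℕ) := by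
    intro m
    have hcol : ∀ l : ℕ, (((ζ ^ (i : ℕ))⁻¹) ^ l) * (ζ ^ (l * (m : ℕ)))
        = ((ζ ^ (m : ℕ)) * (ζ ^ (i : ℕ))⁻¹) ^ l := by
      intro l
      rw [mul_pow, ← pow_mul, mul_comm l (m : ℕ), pow_mul]
      ring
    have hu : ((ζ ^ (m : ℕ)) * (ζ ^ (i : ℕ))⁻¹) ^ n = 1 := by
      rw [mul_pow, ← pow_mul, inv_pow, ← pow_mul, mul_comm (m : ℕ) n, mul_comm (i : ℕ) n,
        pow_mul, pow_mul, hζ.pow_eq_one, one_pow, one_pow, inv_one, mul_one]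
    have hstep : ∀ l ∈ Finset.range n,
        algebraMap (RatFunc k') (AdjoinRoot g) (RatFunc.C (((ζ ^ (i : ℕ))⁻¹) ^ l))
          * (algebraMap (RatFunc k') (AdjoinRoot g)
              (Φ (a m) * RatFunc.C (ζ ^ (l * (m : ℕ)))) * r0 ^ (m : ℕ))
        = algebraMap (RatFunc k') (AdjoinRoot g)
            (Φ (a m) * RatFunc.C ((((ζ ^ (m : ℕ)) * (ζ ^ (i : ℕ))⁻¹)) ^ l)) * r0 ^ (m : ℕ) := by
      intro l _
      rw [← mul_assoc, ← map_mul]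
      congr 2
      rw [show (RatFunc.C (((ζ ^ (i : ℕ))⁻¹) ^ l))
          * (Φ (a m) * RatFunc.C (ζ ^ (l * (m : ℕ))))
          = Φ (a m) * (RatFunc.C ((((ζ ^ (i : ℕ))⁻¹) ^ l) * (ζ ^ (l * (m : ℕ))))) by
        rw [map_mul]; ring]
      rw [hcol l]
    rw [Finset.sum_congr rfl hstep, ← Finset.sum_mul, ← map_sum]
    have hsum : ∑ l ∈ Finset.range n,
        (Φ (a m) * RatFunc.C ((((ζ ^ (m : ℕ)) * (ζ ^ (i : ℕ))⁻¹)) ^ l))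
        = Φ (a m) * RatFunc.C (∑ l ∈ Finset.range n, (((ζ ^ (m : ℕ)) * (ζ ^ (i : ℕ))⁻¹)) ^ l) := by
      rw [← Finset.mul_sum, map_sum]
    rw [hsum, auxD hu]
    have hiff : (((ζ ^ (m : ℕ)) * (ζ ^ (i : ℕ))⁻¹) = 1) ↔ ((m : ℕ) = (i : ℕ)) := by
      rw [mul_inv_eq_one₀ (pow_ne_zero _ hζ0)]
      exact ⟨fun h => hζ.pow_inj m.2 i.2 h, fun h => by rw [h]⟩
    rw [if_congr hiff rfl rfl, mul_comm (Φ (a m))]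
  have hSi : Si = algebraMap (RatFunc k') (AdjoinRoot g) (RatFunc.C (n : k') * Φ (a i))
      * r0 ^ (i : ℕ) := by
    rw [hSidef]
    calc ∑ l ∈ Finset.range n,
        algebraMap (RatFunc k') (AdjoinRoot g) (RatFunc.C (((ζ ^ (i : ℕ))⁻¹) ^ l)) * τ l (ψ z)
        = ∑ l ∈ Finset.range n, ∑ m : Fin n,
            algebraMap (RatFunc k') (AdjoinRoot g) (RatFunc.C (((ζ ^ (i : ℕ))⁻¹) ^ l))
              * (algebraMap (RatFunc k') (AdjoinRoot g)
                  (Φ (a m) * RatFunc.C (ζ ^ (l * (m : ℕ)))) * r0 ^ (m : ℕ)) := by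
          refine Finset.sum_congr rfl (fun l _ => ?_)
          rw [hτz l, Finset.mul_sum]
      _ = ∑ m : Fin n, ∑ l ∈ Finset.range n,
            algebraMap (RatFunc k') (AdjoinRoot g) (RatFunc.C (((ζ ^ (i : ℕ))⁻¹) ^ l))
              * (algebraMap (RatFunc k') (AdjoinRoot g)
                  (Φ (a m) * RatFunc.C (ζ ^ (l * (m : ℕ)))) * r0 ^ (m : ℕ)) :=
          Finset.sum_comm
      _ = ∑ m : Fin n, algebraMap (RatFunc k') (AdjoinRoot g)
            (RatFunc.C (if (m : ℕ) = (i : ℕ) then (n : k') else 0) * Φ (a m)) * r0 ^ (m : ℕ) :=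
          Finset.sum_congr rfl (fun m _ => hterm m)
      _ = algebraMap (RatFunc k') (AdjoinRoot g) (RatFunc.C (n : k') * Φ (a i)) * r0 ^ (i : ℕ) := by
          rw [Fintype.sum_eq_single i]
          · rw [if_pos rfl]
          · intro m hmi
            rw [if_neg (fun h => hmi (Fin.ext h)), map_zero, zero_mul, map_zero, zero_mul]
  have hCint : ∀ c : k', IsIntegral (Polynomial k')
      (algebraMap (RatFunc k') (AdjoinRoot g) (RatFunc.C c)) := by
    intro c
    have : algebraMap (RatFunc k') (AdjoinRoot g) (RatFunc.C c)
        = algebraMap (Polynomial k') (AdjoinRoot g) (Polynomial.C c) := by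
      rw [halg2, RingHom.comp_apply, RatFunc.algebraMap_C]
    rw [this]
    exact isIntegral_algebraMap
  have hSiInt : IsIntegral (Polynomial k') Si := by
    rw [hSidef]
    have : ∀ l ∈ Finset.range n,
        algebraMap (RatFunc k') (AdjoinRoot g) (RatFunc.C (((ζ ^ (i : ℕ))⁻¹) ^ l)) * τ l (ψ z)
          ∈ integralClosure (Polynomial k') (AdjoinRoot g) :=
      fun l _ => mul_mem (hCint _) (hτint l _ hψz)
    exact sum_mem this
  have hfin : IsIntegral (Polynomial k')
      (algebraMap (RatFunc k') (AdjoinRoot g) (Φ (a i)) * r0 ^ (i : ℕ)) := by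
    have heq : algebraMap (RatFunc k') (AdjoinRoot g) (Φ (a i)) * r0 ^ (i : ℕ)
        = algebraMap (RatFunc k') (AdjoinRoot g) (RatFunc.C ((n : k')⁻¹)) * Si := by
      rw [hSi, ← mul_assoc, ← map_mul, ← mul_assoc, ← map_mul,
        inv_mul_cancel₀ hn', map_one, one_mul]
    rw [heq]
    exact (hCint _).mul hSiInt
  have hpowint : IsIntegral (Polynomial k')
      (algebraMap (RatFunc k') (AdjoinRoot g) (Φ ((a i) ^ n * D ^ (i : ℕ)))) := by
    have heq : algebraMap (RatFunc k') (AdjoinRoot g) (Φ ((a i) ^ n * D ^ (i : ℕ)))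
        = (algebraMap (RatFunc k') (AdjoinRoot g) (Φ (a i)) * r0 ^ (i : ℕ)) ^ n := by
      rw [map_mul, map_pow, map_pow, map_mul, map_pow, map_pow, mul_pow, ← pow_mul,
        mul_comm (i : ℕ) n, pow_mul, hr0, ← map_pow, hD']
    rw [heq]
    exact hfin.pow n
  obtain ⟨P, hPm, hPe⟩ := hpowint
  have heval : Polynomial.eval₂ (algebraMap (Polynomial k') (RatFunc k'))
      (Φ ((a i) ^ n * D ^ (i : ℕ))) P = 0 := by
    apply hAinj
    rw [map_zero, ← hPe, Polynomial.hom_eval₂, ← halg2]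
    
  have hrint : IsIntegral (Polynomial k') (Φ ((a i) ^ n * D ^ (i : ℕ))) := ⟨P, hPm, heval⟩
  obtain ⟨q, hq⟩ := IsIntegrallyClosed.isIntegral_iff.mp hrint
  exact Phi_descent φ _ q hq.symm

end Aux17


set_option maxHeartbeats 1600000 in
open scoped Classical in
/-- Wu's global integral basis, generalized: if `D = sgn(D)·∏_{j∈ℤ} f_j^j` is the squarefree
decomposition of `D ∈ k(x)^*` and `D_i = ∏_j f_j^{⌊i·j/n⌋}`, then `D_0 = 1` and
`(1, y/D_1, …, y^{n-1}/D_{n-1})` is a `k[x]`-basis of the integral closure `O` of `k[x]` in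
the radical function field `K = k(x,y)`, `y^n = D`. -/
theorem stmt17 (k : Type) [Field k] (n : ℕ) (hn : 1 < n) (hchar : (n : k) ≠ 0)
    (f : ℤ → Polynomial k) (S : Finset ℤ) (hfS : ∀ j ∉ S, f j = 1)
    (hmonic : ∀ j, (f j).Monic) (hsqfree : ∀ j, Squarefree (f j))
    (hcop : ∀ j₁ j₂, j₁ ≠ j₂ → IsCoprime (f j₁) (f j₂))
    (sgn : k) (hsgn : sgn ≠ 0)
    (D : RatFunc k)
    (hDdecomp : D = RatFunc.C sgn *
      ∏ j ∈ S, (algebraMap (Polynomial k) (RatFunc k) (f j)) ^ j)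
    (hirr : Irreducible ((Polynomial.X : Polynomial (RatFunc k)) ^ n - Polynomial.C D))
    (K : Type) [Field K] [Algebra (RatFunc k) K] [Algebra (Polynomial k) K]
    [IsScalarTower (Polynomial k) (RatFunc k) K]
    (y : K) (hy : y ^ n = algebraMap (RatFunc k) K D)
    (hgen : Algebra.adjoin (RatFunc k) {y} = ⊤)
    (Di : ℕ → RatFunc k)
    (hDi : ∀ i : ℕ, Di i = ∏ j ∈ S,
      (algebraMap (Polynomial k) (RatFunc k) (f j)) ^ Int.fdiv ((i : ℤ) * j) (n : ℤ)) :
    Di 0 = 1 ∧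
    (∀ x : K, x ∈ integralClosure (Polynomial k) K ↔
      ∃ c : Fin n → Polynomial k,
        x = ∑ i : Fin n, algebraMap (RatFunc k) K
              (algebraMap (Polynomial k) (RatFunc k) (c i) / Di (i : ℕ)) * y ^ (i : ℕ)) ∧
    (∀ c : Fin n → Polynomial k,
      ∑ i : Fin n, algebraMap (RatFunc k) K
          (algebraMap (Polynomial k) (RatFunc k) (c i) / Di (i : ℕ)) * y ^ (i : ℕ) = 0 →
      ∀ i, c i = 0) := by
  classical
  have hn0 : 0 < n := lt_trans one_pos hn
  have hfne : ∀ j, f j ≠ 0 := fun j => (hmonic j).ne_zero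
  have hx : ∀ j, (algebraMap (Polynomial k) (RatFunc k)) (f j) ≠ 0 :=
    fun j => RatFunc.algebraMap_ne_zero (hfne j)
  have hDi0 : ∀ i : ℕ, Di i ≠ 0 := fun i => by
    rw [hDi i]
    exact Finset.prod_ne_zero_iff.mpr (fun j _ => zpow_ne_zero _ (hx j))
  have hCsgn : (RatFunc.C sgn : RatFunc k) ≠ 0 := by
    rw [← RatFunc.algebraMap_C]
    exact RatFunc.algebraMap_ne_zero (Polynomial.C_ne_zero.mpr hsgn)
  have hD0 : D ≠ 0 := by
    rw [hDdecomp]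
    exact mul_ne_zero hCsgn
      (Finset.prod_ne_zero_iff.mpr (fun j _ => zpow_ne_zero _ (hx j)))
  have hkey : ∀ i : ℕ, D ^ i = Di i ^ n * (RatFunc.C (sgn ^ i) *
      algebraMap _ _ (∏ j ∈ S, f j ^ ((((i : ℤ)) * j).fmod (n : ℤ)).toNat)) :=
    fun i => auxE n hn0 S f hfne sgn D hDdecomp (Di i) i (hDi i)
  have hρlt : ∀ (i : ℕ) (j : ℤ), ((((i : ℤ)) * j).fmod (n : ℤ)).toNat < n := by
    intro i j
    have h1 := Int.fmod_lt_of_pos ((i : ℤ) * j) (b := (n : ℤ)) (by exact_mod_cast hn0)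
    omega
  -- the power basis
  have hmono : ((Polynomial.X : Polynomial (RatFunc k)) ^ n - Polynomial.C D).Monic :=
    Polynomial.monic_X_pow_sub_C D hn0.ne'
  have haev : Polynomial.aeval y
      ((Polynomial.X : Polynomial (RatFunc k)) ^ n - Polynomial.C D) = 0 := by
    simp [map_sub, hy]
  have hyint : IsIntegral (RatFunc k) y := ⟨_, hmono, haev⟩
  have hmin : minpoly (RatFunc k) y
      = (Polynomial.X : Polynomial (RatFunc k)) ^ n - Polynomial.C D :=
    (minpoly.eq_of_irreducible_of_monic hirr haev hmono).symm
  let e : Algebra.adjoin (RatFunc k) {y} ≃ₐ[RatFunc k] K :=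
    (Subalgebra.equivOfEq _ _ hgen).trans Subalgebra.topEquiv
  let pb : PowerBasis (RatFunc k) K := (Algebra.adjoin.powerBasis hyint).map e
  have hpbgen : pb.gen = y := by simp [pb, Algebra.adjoin.powerBasis, e]
  have hdim : pb.dim = n := by
    show (minpoly (RatFunc k) y).natDegree = n
    rw [hmin, Polynomial.natDegree_X_pow_sub_C]
  let bY : Module.Basis (Fin n) (RatFunc k) K := pb.basis.reindex (finCongr hdim)
  have hbY : ∀ i : Fin n, bY i = y ^ (i : ℕ) := by
    intro i
    rw [Module.Basis.reindex_apply, pb.coe_basis, hpbgen]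
    rfl
  -- the easy direction: each term is integral
  have hterm : ∀ (i : ℕ), ∀ c : Polynomial k,
      algebraMap (RatFunc k) K (algebraMap (Polynomial k) (RatFunc k) c / Di i) * y ^ i
        ∈ integralClosure (Polynomial k) K := by
    intro i c
    set α : RatFunc k := algebraMap (Polynomial k) (RatFunc k) c / Di i with hα
    set Ei : Polynomial k := c ^ n * (Polynomial.C (sgn ^ i)
      * ∏ j ∈ S, f j ^ ((((i : ℤ)) * j).fmod (n : ℤ)).toNat) with hEi
    have hαn : α ^ n * D ^ i = algebraMap _ _ Ei := by
      rw [hα, div_pow, hkey i, hEi, map_mul, map_pow, map_mul, RatFunc.algebraMap_C]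
      have hDn : Di i ^ n ≠ 0 := pow_ne_zero _ (hDi0 i)
      field_simp
      simp only [map_pow]
      ring
    refine ⟨Polynomial.X ^ n - Polynomial.C Ei,
      Polynomial.monic_X_pow_sub_C _ hn0.ne', ?_⟩
    have hev : Polynomial.eval₂ (algebraMap (Polynomial k) K)
        (algebraMap (RatFunc k) K α * y ^ i) (Polynomial.X ^ n - Polynomial.C Ei)
        = (algebraMap (RatFunc k) K α * y ^ i) ^ n - algebraMap (Polynomial k) K Ei := by
      rw [Polynomial.eval₂_sub, Polynomial.eval₂_X_pow, Polynomial.eval₂_C]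
    rw [hev, sub_eq_zero, mul_pow, ← map_pow, ← pow_mul, mul_comm i n, pow_mul, hy,
      ← map_pow, ← map_mul, hαn, IsScalarTower.algebraMap_apply (Polynomial k) (RatFunc k) K]
  refine ⟨?_, ?_, ?_⟩
  · -- Di 0 = 1
    rw [hDi 0]
    refine Finset.prod_eq_one (fun j _ => ?_)
    norm_num
  · -- membership characterization
    intro z
    constructor
    · intro hz
      set a : Fin n → RatFunc k := fun m => bY.repr z m with ha
      have hrep : z = ∑ m : Fin n, algebraMap (RatFunc k) K (a m) * y ^ (m : ℕ) := by
        conv_lhs => rw [← Module.Basis.sum_repr bY z]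
        refine Finset.sum_congr rfl (fun m _ => ?_)
        rw [hbY m, Algebra.smul_def]
      have hhard := auxHard k n hn0 hchar D K y pb hpbgen hmin a z hz hrep
      have hc : ∀ i : Fin n, ∃ c : Polynomial k,
          a i * Di (i : ℕ) = algebraMap _ _ c := by
        intro i
        obtain ⟨p, hp⟩ := hhard i
        refine auxB n S f hsqfree hcop _ (hρlt (i : ℕ)) (sgn ^ (i : ℕ))
          (pow_ne_zero _ hsgn) _ p ?_
        calc (a i * Di (i : ℕ)) ^ n * (RatFunc.C (sgn ^ (i : ℕ)) *
              algebraMap _ _ (∏ j ∈ S, f j ^ (((((i : ℕ) : ℤ)) * j).fmod (n : ℤ)).toNat))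
            = a i ^ n * (Di (i : ℕ) ^ n * (RatFunc.C (sgn ^ (i : ℕ)) *
              algebraMap _ _ (∏ j ∈ S, f j ^ (((((i : ℕ) : ℤ)) * j).fmod (n : ℤ)).toNat))) := by
              ring
          _ = a i ^ n * D ^ (i : ℕ) := by rw [← hkey (i : ℕ)]
          _ = algebraMap _ _ p := hp
      choose c hcc using hc
      refine ⟨c, ?_⟩
      rw [hrep]
      refine Finset.sum_congr rfl (fun m _ => ?_)
      have : a m = algebraMap (Polynomial k) (RatFunc k) (c m) / Di (m : ℕ) := by
        rw [eq_div_iff (hDi0 (m : ℕ))]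
        exact hcc m
      rw [this]
    · rintro ⟨c, rfl⟩
      exact sum_mem (fun m _ => hterm (m : ℕ) (c m))
  · -- linear independence
    intro c hc i
    have h0 : ∑ m : Fin n,
        (algebraMap (Polynomial k) (RatFunc k) (c m) / Di (m : ℕ)) • bY m = 0 := by
      rw [← hc]
      refine Finset.sum_congr rfl (fun m _ => ?_)
      rw [hbY m, Algebra.smul_def]
    have hli := bY.linearIndependent
    rw [Fintype.linearIndependent_iff] at hli
    have hz := hli _ h0 i
    rw [div_eq_zero_iff] at hz
    rcases hz with hz | hz
    · exact (IsFractionRing.injective (Polynomial k) (RatFunc k)) (by rw [hz, map_zero])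
    · exact absurd hz (hDi0 (i : ℕ))
end
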